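/- arXiv:1802.09269 — 8 statements merged into one kernel-verified Lean document; each statement's English description precedes it below -/
import Mathlib

section
/- Let q and q̂ be two income distributions on [0,1] with equal means, μ = ∫₀¹ q(x)dx = ∫₀¹ q̂(x)dx. Suppose there exists x* ∈ [0,1] such that q̂(x) ≤ q(x) for all x ≤ x* and q̂(x) > q(x) for all x > x*. Then G(q) ≤ G(q̂). -/
open MeasureTheory Set

/-- The Gini coefficient of an income distribution `q` on `[0,1]`:
`G(q) = 1 − 2∫₀¹ L(t)dt` where `L(t) = Q(t)/μ`, `Q(t) = ∫₀ᵗ q` and `μ = ∫₀¹ q`. -/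
noncomputable def gini (q : ℝ → ℝ) : ℝ :=
  1 - 2 * ∫ t in (0:ℝ)..1, (∫ x in (0:ℝ)..t, q x) / (∫ x in (0:ℝ)..1, q x)

/-- If two income distributions `q`, `q̂` on `[0,1]` have equal means and cross once
(`q̂ ≤ q` before `x*` and `q̂ > q` after `x*`), then `G(q) ≤ G(q̂)`. -/
theorem gini_le_of_single_crossing
    (q qh : ℝ → ℝ)
    (hq_meas : Measurable q) (hqh_meas : Measurable qh)
    (hq_mono : MonotoneOn q (Icc 0 1)) (hqh_mono : MonotoneOn qh (Icc 0 1))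
    (hq0 : 0 < q 0) (hqh0 : 0 < qh 0)
    (hq_int : IntervalIntegrable q volume 0 1)
    (hqh_int : IntervalIntegrable qh volume 0 1)
    (hmean : ∫ x in (0:ℝ)..1, q x = ∫ x in (0:ℝ)..1, qh x)
    (xs : ℝ) (hxs : xs ∈ Icc (0:ℝ) 1)
    (hle : ∀ x ∈ Icc (0:ℝ) 1, x ≤ xs → qh x ≤ q x)
    (hgt : ∀ x ∈ Icc (0:ℝ) 1, xs < x → q x < qh x) :
    gini q ≤ gini qh := by
  set μ : ℝ := ∫ x in (0:ℝ)..1, q x with hμdef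
  -- μ is positive
  have hμpos : 0 < μ := by
    have h1 : ∫ x in (0:ℝ)..1, (q 0) ≤ ∫ x in (0:ℝ)..1, q x := by
      apply intervalIntegral.integral_mono_on (by norm_num) intervalIntegrable_const hq_int
      intro x hx
      exact hq_mono (left_mem_Icc.2 (by norm_num)) hx hx.1
    simp only [intervalIntegral.integral_const, smul_eq_mul, sub_zero, one_mul] at h1
    exact lt_of_lt_of_le hq0 h1
  -- integrability on subintervals
  have hsub : ∀ a b : ℝ, a ∈ Icc (0:ℝ) 1 → b ∈ Icc (0:ℝ) 1 →
      uIcc a b ⊆ uIcc (0:ℝ) 1 := by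
    intro a b ha hb
    rw [uIcc_of_le (by norm_num : (0:ℝ) ≤ 1)]
    exact uIcc_subset_Icc ha hb
  -- pointwise: partial integrals of qh are ≤ those of q
  have key : ∀ t ∈ Icc (0:ℝ) 1, (∫ x in (0:ℝ)..t, qh x) ≤ ∫ x in (0:ℝ)..t, q x := by
    intro t ht
    rcases le_or_gt t xs with h | h
    · apply intervalIntegral.integral_mono_on ht.1
        (hqh_int.mono_set (hsub 0 t (left_mem_Icc.2 (by norm_num)) ht))
        (hq_int.mono_set (hsub 0 t (left_mem_Icc.2 (by norm_num)) ht))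
      intro x hx
      exact hle x ⟨hx.1, hx.2.trans ht.2⟩ (hx.2.trans h)
    · -- t > xs : use equal means and the tail
      have hq1 : IntervalIntegrable q volume t 1 :=
        hq_int.mono_set (hsub t 1 ht (right_mem_Icc.2 (by norm_num)))
      have hqh1 : IntervalIntegrable qh volume t 1 :=
        hqh_int.mono_set (hsub t 1 ht (right_mem_Icc.2 (by norm_num)))
      have hq01 : IntervalIntegrable q volume 0 t :=
        hq_int.mono_set (hsub 0 t (left_mem_Icc.2 (by norm_num)) ht)
      have hqh01 : IntervalIntegrable qh volume 0 t :=
        hqh_int.mono_set (hsub 0 t (left_mem_Icc.2 (by norm_num)) ht)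
      have hsplitq : (∫ x in (0:ℝ)..t, q x) + ∫ x in t..1, q x = μ :=
        intervalIntegral.integral_add_adjacent_intervals hq01 hq1
      have hsplitqh : (∫ x in (0:ℝ)..t, qh x) + ∫ x in t..1, qh x = μ := by
        rw [hmean]
        exact intervalIntegral.integral_add_adjacent_intervals hqh01 hqh1
      have htail : (∫ x in t..1, q x) ≤ ∫ x in t..1, qh x := by
        apply intervalIntegral.integral_mono_on ht.2 hq1 hqh1
        intro x hx
        exact le_of_lt (hgt x ⟨ht.1.trans hx.1, hx.2⟩ (h.trans_le hx.1))
      linarith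
  -- continuity of the primitives, hence integrability
  have hcontq : ContinuousOn (fun t => ∫ x in (0:ℝ)..t, q x) (Icc 0 1) := by
    have := intervalIntegral.continuousOn_primitive_interval
      (f := q) (μ := volume) (a := 0) (b := 1)
      ((intervalIntegrable_iff').mp hq_int)
    rwa [uIcc_of_le (by norm_num : (0:ℝ) ≤ 1)] at this
  have hcontqh : ContinuousOn (fun t => ∫ x in (0:ℝ)..t, qh x) (Icc 0 1) := by
    have := intervalIntegral.continuousOn_primitive_interval
      (f := qh) (μ := volume) (a := 0) (b := 1)
      ((intervalIntegrable_iff').mp hqh_int)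
    rwa [uIcc_of_le (by norm_num : (0:ℝ) ≤ 1)] at this
  have hQint : IntervalIntegrable (fun t => (∫ x in (0:ℝ)..t, q x) / μ) volume 0 1 := by
    apply ContinuousOn.intervalIntegrable
    rw [uIcc_of_le (by norm_num : (0:ℝ) ≤ 1)]
    exact hcontq.div_const μ
  have hQhint : IntervalIntegrable (fun t => (∫ x in (0:ℝ)..t, qh x) / μ) volume 0 1 := by
    apply ContinuousOn.intervalIntegrable
    rw [uIcc_of_le (by norm_num : (0:ℝ) ≤ 1)]
    exact hcontqh.div_const μ
  have hmain : (∫ t in (0:ℝ)..1, (∫ x in (0:ℝ)..t, qh x) / μ)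
      ≤ ∫ t in (0:ℝ)..1, (∫ x in (0:ℝ)..t, q x) / μ := by
    apply intervalIntegral.integral_mono_on (by norm_num) hQhint hQint
    intro t ht
    exact div_le_div_of_nonneg_right (key t ht) hμpos.le
  unfold gini
  rw [← hmean]
  linarith
end

section
/- Let q and q̂ be two income distributions on [0,1] such that q̂(x) = β(x)·q(x) for a function β with 0 < β(z) ≤ β(y) ≤ 1 whenever z ≤ y (i.e. q̂ is obtained from q by a transformation that reduces lower incomes relatively more than higher incomes, preserving income order). Then G(q) ≤ G(q̂). -/
open MeasureTheory Set

/-- If `q̂(x) = β(x)·q(x)` where `β` is nondecreasing with `0 < β ≤ 1` on `[0,1]`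
(i.e. `q̂` is obtained from `q` by reducing lower incomes relatively more than higher
incomes, preserving income order), then `G(q) ≤ G(q̂)`. -/
theorem gini_le_of_regressive_scaling
    (q β : ℝ → ℝ)
    (hq_meas : Measurable q) (hβ_meas : Measurable β)
    (hq_mono : MonotoneOn q (Icc 0 1)) (hq0 : 0 < q 0)
    (hq_int : IntervalIntegrable q volume 0 1)
    (hqh_int : IntervalIntegrable (fun x => β x * q x) volume 0 1)
    (hβ_pos : ∀ x ∈ Icc (0:ℝ) 1, 0 < β x)
    (hβ_le_one : ∀ x ∈ Icc (0:ℝ) 1, β x ≤ 1)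
    (hβ_mono : MonotoneOn β (Icc 0 1)) :
    gini q ≤ gini (fun x => β x * q x) := by
  have h01 : (0:ℝ) ≤ 1 := zero_le_one
  have mem0 : (0:ℝ) ∈ Icc (0:ℝ) 1 := ⟨le_refl 0, h01⟩
  -- positivity of q on [0,1]
  have hq_pos : ∀ x ∈ Icc (0:ℝ) 1, 0 < q x := fun x hx =>
    lt_of_lt_of_le hq0 (hq_mono mem0 hx hx.1)
  set μ := ∫ x in (0:ℝ)..1, q x with hμdef
  set ν := ∫ x in (0:ℝ)..1, β x * q x with hνdef
  -- μ > 0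
  have hμ_pos : 0 < μ := by
    have : q 0 ≤ μ := by
      have := intervalIntegral.integral_mono_on h01
        (intervalIntegrable_const (c := q 0)) hq_int
        (fun x hx => hq_mono mem0 hx hx.1)
      simpa using this
    linarith
  have hν_pos : 0 < ν := by
    have : β 0 * q 0 ≤ ν := by
      have := intervalIntegral.integral_mono_on h01
        (intervalIntegrable_const (c := β 0 * q 0)) hqh_int
        (fun x hx => mul_le_mul (hβ_mono mem0 hx hx.1) (hq_mono mem0 hx hx.1)
          hq0.le (hβ_pos x hx).le)
      simpa using this
    nlinarith [hβ_pos 0 mem0, hq0]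
  -- pointwise Lorenz comparison
  have key : ∀ t ∈ Icc (0:ℝ) 1,
      (∫ x in (0:ℝ)..t, β x * q x) / ν ≤ (∫ x in (0:ℝ)..t, q x) / μ := by
    intro t ht
    have hsub1 : uIcc (0:ℝ) t ⊆ uIcc (0:ℝ) 1 := by
      rw [uIcc_of_le ht.1, uIcc_of_le h01]; exact Icc_subset_Icc le_rfl ht.2
    have hsub2 : uIcc t (1:ℝ) ⊆ uIcc (0:ℝ) 1 := by
      rw [uIcc_of_le ht.2, uIcc_of_le h01]; exact Icc_subset_Icc ht.1 le_rfl
    have hq1 : IntervalIntegrable q volume 0 t := hq_int.mono_set hsub1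
    have hq2 : IntervalIntegrable q volume t 1 := hq_int.mono_set hsub2
    have hqh1 : IntervalIntegrable (fun x => β x * q x) volume 0 t := hqh_int.mono_set hsub1
    have hqh2 : IntervalIntegrable (fun x => β x * q x) volume t 1 := hqh_int.mono_set hsub2
    set Qt := ∫ x in (0:ℝ)..t, q x with hQt
    set Qh := ∫ x in (0:ℝ)..t, β x * q x with hQh
    set R := ∫ x in t..(1:ℝ), q x with hR
    set Rh := ∫ x in t..(1:ℝ), β x * q x with hRh
    have hμ_split : μ = Qt + R := (intervalIntegral.integral_add_adjacent_intervals hq1 hq2).symm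
    have hν_split : ν = Qh + Rh := (intervalIntegral.integral_add_adjacent_intervals hqh1 hqh2).symm
    have hQt_nonneg : 0 ≤ Qt :=
      intervalIntegral.integral_nonneg ht.1
        (fun x hx => (hq_pos x ⟨hx.1, hx.2.trans ht.2⟩).le)
    have hR_nonneg : 0 ≤ R :=
      intervalIntegral.integral_nonneg ht.2
        (fun x hx => (hq_pos x ⟨ht.1.trans hx.1, hx.2⟩).le)
    -- Qh ≤ β t * Qt
    have hQh_le : Qh ≤ β t * Qt := by
      have := intervalIntegral.integral_mono_on ht.1 hqh1 (hq1.const_mul (β t))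
        (fun x hx => by
          have hx1 : x ∈ Icc (0:ℝ) 1 := ⟨hx.1, hx.2.trans ht.2⟩
          exact mul_le_mul_of_nonneg_right (hβ_mono hx1 ht hx.2) (hq_pos x hx1).le)
      simpa [intervalIntegral.integral_const_mul] using this
    -- β t * R ≤ Rh
    have hRh_ge : β t * R ≤ Rh := by
      have := intervalIntegral.integral_mono_on ht.2 (hq2.const_mul (β t)) hqh2
        (fun x hx => by
          have hx1 : x ∈ Icc (0:ℝ) 1 := ⟨ht.1.trans hx.1, hx.2⟩
          exact mul_le_mul_of_nonneg_right (hβ_mono ht hx1 hx.1) (hq_pos x hx1).le)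
      simpa [intervalIntegral.integral_const_mul] using this
    rw [div_le_div_iff₀ hν_pos hμ_pos, hμ_split, hν_split]
    nlinarith [mul_le_mul_of_nonneg_right hQh_le hR_nonneg,
      mul_le_mul_of_nonneg_left hRh_ge hQt_nonneg]
  -- integrability of the Lorenz curves
  have hcontq : ContinuousOn (fun t => (∫ x in (0:ℝ)..t, q x) / μ) (Icc (0:ℝ) 1) := by
    have := (intervalIntegral.continuousOn_primitive_interval'
      (hq_int) (by rw [uIcc_of_le h01]; exact mem0))
    rw [uIcc_of_le h01] at this
    exact this.div_const μ
  have hcontqh : ContinuousOn (fun t => (∫ x in (0:ℝ)..t, β x * q x) / ν) (Icc (0:ℝ) 1) := by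
    have := (intervalIntegral.continuousOn_primitive_interval'
      (hqh_int) (by rw [uIcc_of_le h01]; exact mem0))
    rw [uIcc_of_le h01] at this
    exact this.div_const ν
  have hintq : IntervalIntegrable (fun t => (∫ x in (0:ℝ)..t, q x) / μ) volume 0 1 :=
    (hcontq.mono (by rw [uIcc_of_le h01])).intervalIntegrable
  have hintqh : IntervalIntegrable (fun t => (∫ x in (0:ℝ)..t, β x * q x) / ν) volume 0 1 :=
    (hcontqh.mono (by rw [uIcc_of_le h01])).intervalIntegrable
  have hmain : (∫ t in (0:ℝ)..1, (∫ x in (0:ℝ)..t, β x * q x) / ν)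
      ≤ ∫ t in (0:ℝ)..1, (∫ x in (0:ℝ)..t, q x) / μ :=
    intervalIntegral.integral_mono_on h01 hintqh hintq key
  simp only [gini]
  linarith
end

section
/- (Iniquity Theorem, cost model CF2.) Let F be a Nash equilibrium flow of a symmetric nonatomic congestion game with type-specific costs, and let each agent's total cost be cost^F(x) = q(x)·S^F(x), where S^F(x) = Σ_{e∈F(x)} f_e(q(x), c^F(e), τ_e). Then for every α > 0 such that the ex post incomes q(x) − α·cost^F(x) remain positive, the ex post income distribution (q(x) − α·cost^F(x))_{x∈[0,1]} is again nondecreasing in x, and its Gini coefficient is at least the Gini coefficient of the ex ante distribution q. -/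
open MeasureTheory Set

/-- The congestion of edge `e` under flow `F`. -/
noncomputable def congestion {E : Type} (F : ℝ → Finset E) (e : E) : ℝ :=
  (volume {x | x ∈ Icc (0:ℝ) 1 ∧ e ∈ F x}).toReal

/-- The path cost `S^F(x) = Σ_{e ∈ F(x)} f_e(q(x), c^F(e), τ_e)`. -/
noncomputable def pathCost {E : Type} (f : E → ℝ → ℝ → ℝ → ℝ) (q : ℝ → ℝ)
    (toll : E → ℝ) (F : ℝ → Finset E) (x : ℝ) : ℝ :=
  ∑ e ∈ F x, f e (q x) (congestion F e) (toll e)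

/-- A flow is finitary if it partitions `[0,1]` into finitely many intervals,
each mapped to a single path. -/
def Finitary {E : Type} (F : ℝ → Finset E) : Prop :=
  ∃ (k : ℕ) (a : ℕ → ℝ), 0 < k ∧ a 0 = 0 ∧ a k = 1 ∧
    (∀ i < k, a i < a (i + 1)) ∧
    ∀ i < k, ∀ b ∈ Ioc (a i) (a (i + 1)), F b = F (a (i + 1))

/-- `F` is a Nash equilibrium. -/
def IsNashEq {E : Type} (f : E → ℝ → ℝ → ℝ → ℝ) (q : ℝ → ℝ) (toll : E → ℝ)
    (paths : Finset (Finset E)) (F : ℝ → Finset E) : Prop :=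
  ∀ x ∈ Icc (0:ℝ) 1, ∀ P ∈ paths,
    pathCost f q toll F x ≤ ∑ e ∈ P, f e (q x) (congestion F e) (toll e)

/-- **The Iniquity Theorem (cost model CF2).** At any Nash equilibrium of a symmetric
nonatomic congestion game with type-specific costs, with agent cost
`cost^F(x) = q(x)·S^F(x)`, for every `α > 0` keeping ex post incomes positive,
the ex post income distribution `q(x) − α·cost^F(x)` is nondecreasing in `x` and its
Gini coefficient is at least the Gini coefficient of the ex ante distribution `q`. -/
theorem iniquity_theorem_CF2
    {E : Type} [Fintype E] [DecidableEq E]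
    (toll : E → ℝ) (htoll : ∀ e, 0 ≤ toll e)
    (paths : Finset (Finset E)) (hpaths : paths.Nonempty)
    (q : ℝ → ℝ) (hq_meas : Measurable q)
    (hq_mono : MonotoneOn q (Icc 0 1)) (hq0 : 0 < q 0)
    (f : E → ℝ → ℝ → ℝ → ℝ)
    (hf_nonneg : ∀ e w z t, 0 ≤ f e w z t)
    (hf_anti_income : ∀ e z t, ∀ w w', w ≤ w' → f e w' z t ≤ f e w z t)
    (hf_mono_cong : ∀ e w t, ∀ z z', z ≤ z' → f e w z t ≤ f e w z' t)
    (hf_mono_toll : ∀ e w z, ∀ t t', t ≤ t' → f e w z t ≤ f e w z t')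
    (F : ℝ → Finset E) (hF : ∀ x ∈ Icc (0:ℝ) 1, F x ∈ paths)
    (hFfin : Finitary F)
    (hNE : IsNashEq f q toll paths F)
    (cst : ℝ → ℝ) (hcst : ∀ x, cst x = q x * pathCost f q toll F x) :
    ∀ α : ℝ, 0 < α → (∀ x ∈ Icc (0:ℝ) 1, 0 < q x - α * cst x) →
      MonotoneOn (fun x => q x - α * cst x) (Icc (0:ℝ) 1) ∧
      gini q ≤ gini (fun x => q x - α * cst x) := by
  intro α hα hpos
  set S := pathCost f q toll F with hSdef
  set g := fun x => q x - α * cst x with hgdef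
  -- basic positivity of q on [0,1]
  have hqpos : ∀ x ∈ Icc (0:ℝ) 1, 0 < q x := fun x hx =>
    lt_of_lt_of_le hq0 (hq_mono (left_mem_Icc.mpr zero_le_one) hx hx.1)
  -- S is antitone on [0,1] by the Nash property
  have hS_anti : AntitoneOn S (Icc (0:ℝ) 1) := by
    intro x hx y hy hxy
    calc S y ≤ ∑ e ∈ F x, f e (q y) (congestion F e) (toll e) := hNE y hy (F x) (hF x hx)
      _ ≤ ∑ e ∈ F x, f e (q x) (congestion F e) (toll e) :=
          Finset.sum_le_sum (fun e _ => hf_anti_income e _ _ _ _ (hq_mono hx hy hxy))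
      _ = S x := rfl
  have hg_eq : ∀ x, g x = q x * (1 - α * S x) := by
    intro x; simp only [hgdef, hcst, hSdef]; ring
  have hhpos : ∀ x ∈ Icc (0:ℝ) 1, 0 < 1 - α * S x := by
    intro x hx
    have h1 := hpos x hx
    rw [hcst x] at h1
    have h2 := hqpos x hx
    nlinarith
  have hh_mono : MonotoneOn (fun x => 1 - α * S x) (Icc (0:ℝ) 1) := by
    intro x hx y hy hxy
    have := hS_anti hx hy hxy
    simp only
    nlinarith
  have hg_mono : MonotoneOn g (Icc (0:ℝ) 1) := by
    intro x hx y hy hxy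
    rw [hg_eq, hg_eq]
    exact mul_le_mul (hq_mono hx hy hxy) (hh_mono hx hy hxy)
      (hhpos x hx).le (hqpos y hy).le
  refine ⟨hg_mono, ?_⟩
  -- integrability facts
  have huIcc : ∀ a b : ℝ, a ∈ Icc (0:ℝ) 1 → b ∈ Icc (0:ℝ) 1 → uIcc a b ⊆ Icc (0:ℝ) 1 := by
    intro a b ha hb
    rw [Set.uIcc]
    exact Icc_subset_Icc (le_inf ha.1 hb.1) (sup_le ha.2 hb.2)
  have hq_ii : ∀ a b : ℝ, a ∈ Icc (0:ℝ) 1 → b ∈ Icc (0:ℝ) 1 →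
      IntervalIntegrable q volume a b := fun a b ha hb =>
    (hq_mono.mono (huIcc a b ha hb)).intervalIntegrable
  have hg_ii : ∀ a b : ℝ, a ∈ Icc (0:ℝ) 1 → b ∈ Icc (0:ℝ) 1 →
      IntervalIntegrable g volume a b := fun a b ha hb =>
    (hg_mono.mono (huIcc a b ha hb)).intervalIntegrable
  have h01 : (0:ℝ) ∈ Icc (0:ℝ) 1 := left_mem_Icc.mpr zero_le_one
  have h11 : (1:ℝ) ∈ Icc (0:ℝ) 1 := right_mem_Icc.mpr zero_le_one
  set μ := ∫ x in (0:ℝ)..1, q x with hμdef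
  set ν := ∫ x in (0:ℝ)..1, g x with hνdef
  have hμ : 0 < μ :=
    intervalIntegral.intervalIntegral_pos_of_pos_on (hq_ii 0 1 h01 h11)
      (fun x hx => hqpos x ⟨hx.1.le, hx.2.le⟩) one_pos
  have hν : 0 < ν :=
    intervalIntegral.intervalIntegral_pos_of_pos_on (hg_ii 0 1 h01 h11)
      (fun x hx => hpos x ⟨hx.1.le, hx.2.le⟩) one_pos
  -- nonnegativity of partial integrals
  have hQnn : ∀ a b : ℝ, a ∈ Icc (0:ℝ) 1 → b ∈ Icc (0:ℝ) 1 → a ≤ b →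
      0 ≤ ∫ x in a..b, q x := fun a b ha hb hab =>
    intervalIntegral.integral_nonneg hab
      (fun u hu => (hqpos u ⟨le_trans ha.1 hu.1, le_trans hu.2 hb.2⟩).le)
  have hGnn : ∀ a b : ℝ, a ∈ Icc (0:ℝ) 1 → b ∈ Icc (0:ℝ) 1 → a ≤ b →
      0 ≤ ∫ x in a..b, g x := fun a b ha hb hab =>
    intervalIntegral.integral_nonneg hab
      (fun u hu => (hpos u ⟨le_trans ha.1 hu.1, le_trans hu.2 hb.2⟩).le)
  -- key pointwise inequality
  have key : ∀ t ∈ Icc (0:ℝ) 1,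
      (∫ x in (0:ℝ)..t, g x) / ν ≤ (∫ x in (0:ℝ)..t, q x) / μ := by
    intro t ht
    have ht01 : Icc (0:ℝ) t ⊆ Icc (0:ℝ) 1 := Icc_subset_Icc le_rfl ht.2
    have ht11 : Icc t 1 ⊆ Icc (0:ℝ) 1 := Icc_subset_Icc ht.1 le_rfl
    rw [div_le_div_iff₀ hν hμ]
    set Qt := ∫ x in (0:ℝ)..t, q x with hQt
    set Gt := ∫ x in (0:ℝ)..t, g x with hGt
    set R := ∫ x in t..1, q x with hR
    set Rg := ∫ x in t..1, g x with hRg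
    have hsplitq : μ = Qt + R :=
      (intervalIntegral.integral_add_adjacent_intervals (hq_ii 0 t h01 ht)
        (hq_ii t 1 ht h11)).symm
    have hsplitg : ν = Gt + Rg :=
      (intervalIntegral.integral_add_adjacent_intervals (hg_ii 0 t h01 ht)
        (hg_ii t 1 ht h11)).symm
    have h1 : Gt ≤ (1 - α * S t) * Qt := by
      have : Gt ≤ ∫ x in (0:ℝ)..t, (1 - α * S t) * q x := by
        refine intervalIntegral.integral_mono_on ht.1 (hg_ii 0 t h01 ht)
          ((hq_ii 0 t h01 ht).const_mul _) (fun x hx => ?_)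
        have hx1 : x ∈ Icc (0:ℝ) 1 := ht01 hx
        rw [hg_eq]
        have := hh_mono hx1 ht hx.2
        have hqx := (hqpos x hx1).le
        simp only at this
        nlinarith
      rwa [intervalIntegral.integral_const_mul] at this
    have h2 : (1 - α * S t) * R ≤ Rg := by
      have : (∫ x in t..1, (1 - α * S t) * q x) ≤ Rg := by
        refine intervalIntegral.integral_mono_on ht.2
          ((hq_ii t 1 ht h11).const_mul _) (hg_ii t 1 ht h11) (fun x hx => ?_)
        have hx1 : x ∈ Icc (0:ℝ) 1 := ht11 hx
        rw [hg_eq]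
        have := hh_mono ht hx1 hx.1
        have hqx := (hqpos x hx1).le
        simp only at this
        nlinarith
      rwa [intervalIntegral.integral_const_mul] at this
    have hQtnn : 0 ≤ Qt := hQnn 0 t h01 ht ht.1
    have hGtnn : 0 ≤ Gt := hGnn 0 t h01 ht ht.1
    have hRnn : 0 ≤ R := hQnn t 1 ht h11 ht.2
    have hht : 0 ≤ 1 - α * S t := (hhpos t ht).le
    rw [hsplitq, hsplitg]
    nlinarith [mul_le_mul_of_nonneg_right h1 hRnn, mul_le_mul_of_nonneg_left h2 hQtnn]
  -- monotonicity of the cumulative-income functions, for integrability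
  have hQ_mono : MonotoneOn (fun t => (∫ x in (0:ℝ)..t, q x) / μ) (Icc (0:ℝ) 1) := by
    intro a ha b hb hab
    have hsplit : (∫ x in (0:ℝ)..b, q x) = (∫ x in (0:ℝ)..a, q x) + ∫ x in a..b, q x :=
      (intervalIntegral.integral_add_adjacent_intervals (hq_ii 0 a h01 ha)
        (hq_ii a b ha hb)).symm
    have hnn := hQnn a b ha hb hab
    simp only
    rw [hsplit]
    exact (div_le_div_iff_of_pos_right hμ).mpr (by linarith)
  have hG_mono : MonotoneOn (fun t => (∫ x in (0:ℝ)..t, g x) / ν) (Icc (0:ℝ) 1) := by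
    intro a ha b hb hab
    have hsplit : (∫ x in (0:ℝ)..b, g x) = (∫ x in (0:ℝ)..a, g x) + ∫ x in a..b, g x :=
      (intervalIntegral.integral_add_adjacent_intervals (hg_ii 0 a h01 ha)
        (hg_ii a b ha hb)).symm
    have hnn := hGnn a b ha hb hab
    simp only
    rw [hsplit]
    exact (div_le_div_iff_of_pos_right hν).mpr (by linarith)
  have huIcc01 : uIcc (0:ℝ) 1 = Icc (0:ℝ) 1 := uIcc_of_le zero_le_one
  have hfinal : (∫ t in (0:ℝ)..1, (∫ x in (0:ℝ)..t, g x) / ν)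
      ≤ ∫ t in (0:ℝ)..1, (∫ x in (0:ℝ)..t, q x) / μ := by
    refine intervalIntegral.integral_mono_on zero_le_one ?_ ?_ key
    · exact MonotoneOn.intervalIntegrable (by rw [huIcc01]; exact hG_mono)
    · exact MonotoneOn.intervalIntegrable (by rw [huIcc01]; exact hQ_mono)
  simp only [gini, ← hμdef, ← hνdef]
  linarith
end

section
/- (Iniquity Theorem, cost model CF1.) Let F be a Nash equilibrium flow of a symmetric nonatomic congestion game with type-specific costs, and let each agent's total cost be cost^F(x) = S^F(x) = Σ_{e∈F(x)} f_e(q(x), c^F(e), τ_e). Then for every α > 0 such that the ex post incomes q(x) − α·cost^F(x) remain positive, the ex post income distribution (q(x) − α·cost^F(x))_{x∈[0,1]} is nondecreasing in x, and its Gini coefficient is at least the Gini coefficient of the ex ante distribution q. -/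
open MeasureTheory Set

private lemma avg_mono_aux (u : ℝ → ℝ) (hu : MonotoneOn u (Icc 0 1))
    (hui : ∀ s t : ℝ, s ∈ Icc (0:ℝ) 1 → t ∈ Icc (0:ℝ) 1 → IntervalIntegrable u volume s t)
    {t : ℝ} (ht : t ∈ Icc (0:ℝ) 1) :
    ∫ x in (0:ℝ)..t, u x ≤ t * ∫ x in (0:ℝ)..1, u x := by
  have h01 : (0:ℝ) ∈ Icc (0:ℝ) 1 := ⟨le_refl 0, zero_le_one⟩
  have h11 : (1:ℝ) ∈ Icc (0:ℝ) 1 := ⟨zero_le_one, le_refl 1⟩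
  rcases eq_or_lt_of_le ht.1 with h0 | h0
  · simp [← h0]
  · have h1 : (∫ x in (0:ℝ)..t, u x) ≤ t * u t := by
      have := intervalIntegral.integral_mono_on h0.le (hui 0 t h01 ht)
        (intervalIntegrable_const (c := u t))
        (fun x hx => hu ⟨hx.1, hx.2.trans ht.2⟩ ht hx.2)
      simpa using this
    have h2 : (1 - t) * u t ≤ ∫ x in t..1, u x := by
      have := intervalIntegral.integral_mono_on ht.2 (intervalIntegrable_const (c := u t))
        (hui t 1 ht h11) (fun x hx => hu ht ⟨ht.1.trans hx.1, hx.2⟩ hx.1)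
      simpa using this
    have h3 : (∫ x in (0:ℝ)..t, u x) + ∫ x in t..1, u x = ∫ x in (0:ℝ)..1, u x :=
      intervalIntegral.integral_add_adjacent_intervals (hui 0 t h01 ht) (hui t 1 ht h11)
    nlinarith [mul_le_mul_of_nonneg_left h2 h0.le,
      mul_le_mul_of_nonneg_right h1 (sub_nonneg.2 ht.2)]

/-- **The Iniquity Theorem (cost model CF1).** At any Nash equilibrium of a symmetric
nonatomic congestion game with type-specific costs, with agent cost
`cost^F(x) = S^F(x)`, for every `α > 0` keeping ex post incomes positive,
the ex post income distribution `q(x) − α·cost^F(x)` is nondecreasing in `x` and its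
Gini coefficient is at least the Gini coefficient of the ex ante distribution `q`. -/
theorem iniquity_theorem_CF1
    {E : Type} [Fintype E] [DecidableEq E]
    (toll : E → ℝ) (htoll : ∀ e, 0 ≤ toll e)
    (paths : Finset (Finset E)) (hpaths : paths.Nonempty)
    (q : ℝ → ℝ) (hq_meas : Measurable q)
    (hq_mono : MonotoneOn q (Icc 0 1)) (hq0 : 0 < q 0)
    (f : E → ℝ → ℝ → ℝ → ℝ)
    (hf_nonneg : ∀ e w z t, 0 ≤ f e w z t)
    (hf_anti_income : ∀ e z t, ∀ w w', w ≤ w' → f e w' z t ≤ f e w z t)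
    (hf_mono_cong : ∀ e w t, ∀ z z', z ≤ z' → f e w z t ≤ f e w z' t)
    (hf_mono_toll : ∀ e w z, ∀ t t', t ≤ t' → f e w z t ≤ f e w z t')
    (F : ℝ → Finset E) (hF : ∀ x ∈ Icc (0:ℝ) 1, F x ∈ paths)
    (hFfin : Finitary F)
    (hNE : IsNashEq f q toll paths F)
    (cst : ℝ → ℝ) (hcst : ∀ x, cst x = pathCost f q toll F x) :
    ∀ α : ℝ, 0 < α → (∀ x ∈ Icc (0:ℝ) 1, 0 < q x - α * cst x) →
      MonotoneOn (fun x => q x - α * cst x) (Icc (0:ℝ) 1) ∧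
      gini q ≤ gini (fun x => q x - α * cst x) := by
  intro α hα hpos
  have h01 : (0:ℝ) ∈ Icc (0:ℝ) 1 := ⟨le_refl 0, zero_le_one⟩
  have h11 : (1:ℝ) ∈ Icc (0:ℝ) 1 := ⟨zero_le_one, le_refl 1⟩
  -- cst is antitone on [0,1]
  have hcst_anti : AntitoneOn cst (Icc 0 1) := by
    intro x hx y hy hxy
    rw [hcst, hcst]
    calc pathCost f q toll F y ≤ ∑ e ∈ F x, f e (q y) (congestion F e) (toll e) :=
          hNE y hy (F x) (hF x hx)
      _ ≤ ∑ e ∈ F x, f e (q x) (congestion F e) (toll e) :=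
          Finset.sum_le_sum fun e _ => hf_anti_income e _ _ _ _ (hq_mono hx hy hxy)
      _ = pathCost f q toll F x := rfl
  have hcst_nonneg : ∀ x, 0 ≤ cst x := fun x => by
    rw [hcst]; exact Finset.sum_nonneg fun e _ => hf_nonneg _ _ _ _
  -- monotonicity of ex post income
  have hmono : MonotoneOn (fun x => q x - α * cst x) (Icc (0:ℝ) 1) := by
    intro x hx y hy hxy
    exact sub_le_sub (hq_mono hx hy hxy)
      (mul_le_mul_of_nonneg_left (hcst_anti hx hy hxy) hα.le)
  refine ⟨hmono, ?_⟩
  -- integrability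
  have hqi : ∀ s t : ℝ, s ∈ Icc (0:ℝ) 1 → t ∈ Icc (0:ℝ) 1 → IntervalIntegrable q volume s t :=
    fun s t hs ht => (hq_mono.mono (uIcc_subset_Icc hs ht)).intervalIntegrable
  have hci : ∀ s t : ℝ, s ∈ Icc (0:ℝ) 1 → t ∈ Icc (0:ℝ) 1 → IntervalIntegrable cst volume s t :=
    fun s t hs ht => (hcst_anti.mono (uIcc_subset_Icc hs ht)).intervalIntegrable
  have hgi : ∀ s t : ℝ, s ∈ Icc (0:ℝ) 1 → t ∈ Icc (0:ℝ) 1 →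
      IntervalIntegrable (fun x => q x - α * cst x) volume s t :=
    fun s t hs ht => (hmono.mono (uIcc_subset_Icc hs ht)).intervalIntegrable
  -- positivity of means
  have hμpos : 0 < ∫ x in (0:ℝ)..1, q x := by
    have h : (q 0 : ℝ) * (1 - 0) ≤ ∫ x in (0:ℝ)..1, q x := by
      have := intervalIntegral.integral_mono_on zero_le_one
        (intervalIntegrable_const (c := q 0)) (hqi 0 1 h01 h11)
        (fun x hx => hq_mono h01 hx hx.1)
      simpa using this
    nlinarith
  have hνpos : 0 < ∫ x in (0:ℝ)..1, (q x - α * cst x) := by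
    have h : (q 0 - α * cst 0) * (1 - 0) ≤ ∫ x in (0:ℝ)..1, (q x - α * cst x) := by
      have := intervalIntegral.integral_mono_on zero_le_one
        (intervalIntegrable_const (c := q 0 - α * cst 0)) (hgi 0 1 h01 h11)
        (fun x hx => hmono h01 hx hx.1)
      simpa using this
    nlinarith [hpos 0 h01]
  have hM : 0 ≤ ∫ x in (0:ℝ)..1, cst x :=
    intervalIntegral.integral_nonneg zero_le_one (fun u _ => hcst_nonneg u)
  -- averaging bounds
  have hQt : ∀ t ∈ Icc (0:ℝ) 1, ∫ x in (0:ℝ)..t, q x ≤ t * ∫ x in (0:ℝ)..1, q x :=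
    fun t ht => avg_mono_aux q hq_mono hqi ht
  have hCt : ∀ t ∈ Icc (0:ℝ) 1, t * (∫ x in (0:ℝ)..1, cst x) ≤ ∫ x in (0:ℝ)..t, cst x := by
    intro t ht
    have := avg_mono_aux (fun x => -cst x)
      (fun x hx y hy hxy => neg_le_neg (hcst_anti hx hy hxy))
      (fun s t hs ht => (hci s t hs ht).neg) ht
    rw [intervalIntegral.integral_neg, intervalIntegral.integral_neg] at this
    linarith
  -- splitting the ex post integral
  have hsplit : ∀ t ∈ Icc (0:ℝ) 1, ∫ x in (0:ℝ)..t, (q x - α * cst x) =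
      (∫ x in (0:ℝ)..t, q x) - α * ∫ x in (0:ℝ)..t, cst x := by
    intro t ht
    rw [intervalIntegral.integral_sub (hqi 0 t h01 ht) ((hci 0 t h01 ht).const_mul α),
      intervalIntegral.integral_const_mul]
  -- pointwise bound on cumulative shares
  have hpt : ∀ t ∈ Icc (0:ℝ) 1,
      (∫ x in (0:ℝ)..t, (q x - α * cst x)) / (∫ x in (0:ℝ)..1, (q x - α * cst x)) ≤
      (∫ x in (0:ℝ)..t, q x) / (∫ x in (0:ℝ)..1, q x) := by
    intro t ht
    rw [div_le_div_iff₀ hνpos hμpos, hsplit t ht, hsplit 1 h11]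
    have hMQ : (∫ x in (0:ℝ)..1, cst x) * (∫ x in (0:ℝ)..t, q x) ≤
        (∫ x in (0:ℝ)..t, cst x) * (∫ x in (0:ℝ)..1, q x) := by
      nlinarith [mul_le_mul_of_nonneg_left (hQt t ht) hM,
        mul_le_mul_of_nonneg_right (hCt t ht) hμpos.le]
    nlinarith [mul_le_mul_of_nonneg_left hMQ hα.le]
  -- monotonicity in t of both primitives (for integrability)
  have hQmono : MonotoneOn (fun t => ∫ x in (0:ℝ)..t, q x) (Icc (0:ℝ) 1) := by
    intro s hs t ht hst
    have h3 : (∫ x in (0:ℝ)..s, q x) + ∫ x in s..t, q x = ∫ x in (0:ℝ)..t, q x :=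
      intervalIntegral.integral_add_adjacent_intervals (hqi 0 s h01 hs) (hqi s t hs ht)
    have h4 : 0 ≤ ∫ x in s..t, q x := by
      refine intervalIntegral.integral_nonneg hst (fun u hu => ?_)
      have humem : u ∈ Icc (0:ℝ) 1 := ⟨hs.1.trans hu.1, hu.2.trans ht.2⟩
      exact (hq0.trans_le (hq_mono h01 humem humem.1)).le
    simp only []
    linarith
  have hGmono : MonotoneOn (fun t => ∫ x in (0:ℝ)..t, (q x - α * cst x)) (Icc (0:ℝ) 1) := by
    intro s hs t ht hst
    have h3 : (∫ x in (0:ℝ)..s, (q x - α * cst x)) + ∫ x in s..t, (q x - α * cst x) =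
        ∫ x in (0:ℝ)..t, (q x - α * cst x) :=
      intervalIntegral.integral_add_adjacent_intervals (hgi 0 s h01 hs) (hgi s t hs ht)
    have h4 : 0 ≤ ∫ x in s..t, (q x - α * cst x) := by
      refine intervalIntegral.integral_nonneg hst (fun u hu => ?_)
      have humem : u ∈ Icc (0:ℝ) 1 := ⟨hs.1.trans hu.1, hu.2.trans ht.2⟩
      exact (hpos u humem).le
    simp only []
    linarith
  have huIcc : uIcc (0:ℝ) 1 = Icc (0:ℝ) 1 := uIcc_of_le zero_le_one
  have hQint : IntervalIntegrable
      (fun t => (∫ x in (0:ℝ)..t, q x) / (∫ x in (0:ℝ)..1, q x)) volume 0 1 := by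
    exact ((huIcc ▸ hQmono).intervalIntegrable).div_const _
  have hGint : IntervalIntegrable
      (fun t => (∫ x in (0:ℝ)..t, (q x - α * cst x)) /
        (∫ x in (0:ℝ)..1, (q x - α * cst x))) volume 0 1 := by
    exact ((huIcc ▸ hGmono).intervalIntegrable).div_const _
  have hle := intervalIntegral.integral_mono_on zero_le_one hGint hQint hpt
  simp only [gini]
  linarith
end

section
/- Let F be a Nash equilibrium flow of a symmetric nonatomic congestion game with type-specific costs, with agent costs given by either cost^F(x) = S^F(x) (CF1) or cost^F(x) = q(x)·S^F(x) (CF2). Then the iniquity index of the game, I(Γ) = lim_{α→0⁺} (G(q_α) − G(q))/α with q_α(x) = q(x) − α·cost^F(x), is nonnegative. -/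
open MeasureTheory Set Filter

lemma piece_cover {k : ℕ} {a : ℕ → ℝ} (h0 : a 0 = 0) (hk1 : a k = 1)
    (hmono : ∀ i < k, a i < a (i+1)) {x : ℝ} (hx : x ∈ Ioc (0:ℝ) 1) :
    ∃ i < k, x ∈ Ioc (a i) (a (i+1)) := by
  by_contra h
  push_neg at h
  have key : ∀ i, i ≤ k → a i < x := by
    intro i
    induction i with
    | zero => intro _; rw [h0]; exact hx.1
    | succ n ih =>
      intro hn
      have hn' : n < k := hn
      have h1 := ih (Nat.le_of_lt hn')
      have h2 := h n hn'
      by_contra hc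
      push_neg at hc
      exact h2 ⟨h1, hc⟩
  have := key k le_rfl
  rw [hk1] at this
  exact absurd hx.2 (not_le_of_gt this)

lemma a_mono {k : ℕ} {a : ℕ → ℝ} (hmono : ∀ i < k, a i < a (i+1)) :
    ∀ n ≤ k, ∀ m ≤ n, a m ≤ a n := by
  intro n
  induction n with
  | zero => intro _ m hm; interval_cases m; exact le_rfl
  | succ p ih =>
    intro hn m hm
    rcases Nat.lt_succ_iff_lt_or_eq.mp (Nat.lt_succ_of_le hm) with h | h
    · exact le_trans (ih (by omega) m (by omega)) (le_of_lt (hmono p (by omega)))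
    · rw [h]


/-- The iniquity index `I(Γ) = lim_{α→0⁺} (G(q_α) − G(q))/α` of a symmetric nonatomic
congestion game at a Nash equilibrium, with agent cost given by CF1
(`cost^F = S^F`) or CF2 (`cost^F = q·S^F`), exists and is nonnegative. -/
theorem iniquity_index_nonneg
    {E : Type} [Fintype E] [DecidableEq E]
    (toll : E → ℝ) (htoll : ∀ e, 0 ≤ toll e)
    (paths : Finset (Finset E)) (hpaths : paths.Nonempty)
    (q : ℝ → ℝ) (hq_meas : Measurable q)
    (hq_mono : MonotoneOn q (Icc 0 1)) (hq0 : 0 < q 0)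
    (hq_int : IntervalIntegrable q volume 0 1)
    (hμ_pos : 0 < ∫ x in (0:ℝ)..1, q x)
    (f : E → ℝ → ℝ → ℝ → ℝ)
    (hf_nonneg : ∀ e w z t, 0 ≤ f e w z t)
    (hf_anti_income : ∀ e z t, ∀ w w', w ≤ w' → f e w' z t ≤ f e w z t)
    (hf_mono_cong : ∀ e w t, ∀ z z', z ≤ z' → f e w z t ≤ f e w z' t)
    (hf_mono_toll : ∀ e w z, ∀ t t', t ≤ t' → f e w z t ≤ f e w z t')
    (F : ℝ → Finset E) (hF : ∀ x ∈ Icc (0:ℝ) 1, F x ∈ paths)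
    (hFfin : Finitary F)
    (hNE : IsNashEq f q toll paths F)
    (cst : ℝ → ℝ)
    (hcst : (∀ x, cst x = pathCost f q toll F x) ∨
            (∀ x, cst x = q x * pathCost f q toll F x)) :
    ∃ I : ℝ, 0 ≤ I ∧
      Tendsto (fun α : ℝ => (gini (fun x => q x - α * cst x) - gini q) / α)
        (nhdsWithin 0 (Ioi 0)) (nhds I) := by
  classical
  set S : ℝ → ℝ := pathCost f q toll F with hSdef
  -- basic positivity of q on [0,1]
  have hq_le : ∀ x ∈ Icc (0:ℝ) 1, q 0 ≤ q x := fun x hx =>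
    hq_mono (left_mem_Icc.2 zero_le_one) hx hx.1
  have hq_pos : ∀ x ∈ Icc (0:ℝ) 1, 0 < q x := fun x hx => lt_of_lt_of_le hq0 (hq_le x hx)
  have hq_le1 : ∀ x ∈ Icc (0:ℝ) 1, q x ≤ q 1 := fun x hx =>
    hq_mono hx (right_mem_Icc.2 zero_le_one) hx.2
  -- S facts
  have hS_nonneg : ∀ x, 0 ≤ S x := fun x =>
    Finset.sum_nonneg fun e _ => hf_nonneg e _ _ _
  set M : ℝ := ∑ e ∈ Finset.univ, f e (q 0) (congestion F e) (toll e) with hMdef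
  have hM_nonneg : 0 ≤ M := Finset.sum_nonneg fun e _ => hf_nonneg e _ _ _
  have hS_le : ∀ x ∈ Icc (0:ℝ) 1, S x ≤ M := by
    intro x hx
    calc S x ≤ ∑ e ∈ F x, f e (q 0) (congestion F e) (toll e) :=
          Finset.sum_le_sum fun e _ => hf_anti_income e _ _ (q 0) (q x) (hq_le x hx)
      _ ≤ M := Finset.sum_le_sum_of_subset_of_nonneg (Finset.subset_univ _)
          (fun e _ _ => hf_nonneg e _ _ _)
  have hS_anti : ∀ x ∈ Icc (0:ℝ) 1, ∀ y ∈ Icc (0:ℝ) 1, x ≤ y → S y ≤ S x := by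
    intro x hx y hy hxy
    calc S y ≤ ∑ e ∈ F x, f e (q y) (congestion F e) (toll e) :=
          hNE y hy (F x) (hF x hx)
      _ ≤ ∑ e ∈ F x, f e (q x) (congestion F e) (toll e) :=
          Finset.sum_le_sum fun e _ => hf_anti_income e _ _ (q x) (q y) (hq_mono hx hy hxy)
      _ = S x := rfl
  -- measurable model of S on (0,1]
  obtain ⟨k, a, hk, ha0, hak, hlt, hpiece⟩ := hFfin
  set ψ : Finset E → ℝ → ℝ :=
    fun P x => ∑ e ∈ P, f e (q x) (congestion F e) (toll e) with hψdef
  have hψ_meas : ∀ P, Measurable (ψ P) := by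
    intro P
    apply Finset.measurable_sum
    intro e _
    have hanti : Antitone fun w => f e w (congestion F e) (toll e) :=
      fun w w' h => hf_anti_income e _ _ w w' h
    exact hanti.measurable.comp hq_meas
  set φ : ℝ → ℝ :=
    fun x => ∑ i ∈ Finset.range k, (Ioc (a i) (a (i+1))).indicator (ψ (F (a (i+1)))) x
    with hφdef
  have hφ_meas : Measurable φ :=
    Finset.measurable_sum _ fun i _ => ((hψ_meas _).indicator measurableSet_Ioc)
  have hφ_eq : ∀ x ∈ Ioc (0:ℝ) 1, S x = φ x := by
    intro x hx
    obtain ⟨i, hik, hxi⟩ := piece_cover ha0 hak hlt hx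
    have hother : ∀ j ∈ Finset.range k, j ≠ i →
        (Ioc (a j) (a (j+1))).indicator (ψ (F (a (j+1)))) x = 0 := by
      intro j hj hne
      apply Set.indicator_of_notMem
      intro hxj
      rcases lt_or_gt_of_ne hne with hji | hij
      · have : a (j+1) ≤ a i := a_mono hlt i hik.le (j+1) (by omega)
        exact absurd hxj.2 (not_le_of_gt (lt_of_le_of_lt this hxi.1))
      · have : a (i+1) ≤ a j := a_mono hlt j (Finset.mem_range.mp hj).le (i+1) (by omega)
        exact absurd hxj.1 (not_lt_of_ge (le_trans hxi.2 this))
    have : φ x = (Ioc (a i) (a (i+1))).indicator (ψ (F (a (i+1)))) x :=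
      Finset.sum_eq_single_of_mem i (Finset.mem_range.mpr hik) hother
    rw [this, Set.indicator_of_mem hxi]
    show S x = ψ (F (a (i+1))) x
    rw [hSdef, hψdef]
    simp only [pathCost]
    rw [hpiece i hik x hxi]
  -- facts about cst
  have hIoc_sub : Ioc (0:ℝ) 1 ⊆ Icc 0 1 := Ioc_subset_Icc_self
  obtain ⟨φc, hφc_meas, hφc_eq⟩ :
      ∃ φc : ℝ → ℝ, Measurable φc ∧ ∀ x ∈ Ioc (0:ℝ) 1, cst x = φc x := by
    rcases hcst with h | h
    · exact ⟨φ, hφ_meas, fun x hx => by rw [h x]; exact hφ_eq x hx⟩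
    · exact ⟨fun x => q x * φ x, hq_meas.mul hφ_meas,
        fun x hx => by rw [h x]; simp only; rw [hφ_eq x hx]⟩
  have hcst_nonneg : ∀ x ∈ Icc (0:ℝ) 1, 0 ≤ cst x := by
    intro x hx
    rcases hcst with h | h
    · rw [h x]; exact hS_nonneg x
    · rw [h x]; exact mul_nonneg (hq_pos x hx).le (hS_nonneg x)
  have hcst_le : ∀ x ∈ Icc (0:ℝ) 1, cst x ≤ (1 + q 1) * M := by
    intro x hx
    have hq1 : 0 ≤ q 1 := (hq_pos 1 (right_mem_Icc.2 zero_le_one)).le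
    rcases hcst with h | h
    · rw [h x]
      calc S x ≤ M := hS_le x hx
        _ ≤ (1 + q 1) * M := by nlinarith
    · rw [h x]
      calc q x * S x ≤ q 1 * M :=
            mul_le_mul (hq_le1 x hx) (hS_le x hx) (hS_nonneg x) hq1
        _ ≤ (1 + q 1) * M := by nlinarith
  have hcst_key : ∀ s ∈ Icc (0:ℝ) 1, ∀ u ∈ Icc (0:ℝ) 1, s ≤ u →
      cst u * q s ≤ cst s * q u := by
    intro s hs u hu hsu
    have hSus : S u ≤ S s := hS_anti s hs u hu hsu
    have hqs : 0 ≤ q s := (hq_pos s hs).le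
    have hqu : 0 ≤ q u := (hq_pos u hu).le
    have hqsu : q s ≤ q u := hq_mono hs hu hsu
    rcases hcst with h | h
    · rw [h s, h u]
      calc S u * q s ≤ S s * q s := mul_le_mul_of_nonneg_right hSus hqs
        _ ≤ S s * q u := mul_le_mul_of_nonneg_left hqsu (hS_nonneg s)
    · rw [h s, h u]
      have : q s * q u * S u ≤ q s * q u * S s :=
        mul_le_mul_of_nonneg_left hSus (mul_nonneg hqs hqu)
      nlinarith
  have hcst_int : IntervalIntegrable cst volume 0 1 := by
    rw [intervalIntegrable_iff_integrableOn_Ioc_of_le zero_le_one]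
    have hae : ∀ᵐ x ∂(volume.restrict (Ioc (0:ℝ) 1)), cst x = φc x :=
      (ae_restrict_iff' measurableSet_Ioc).2 (ae_of_all _ hφc_eq)
    have haes : AEStronglyMeasurable cst (volume.restrict (Ioc (0:ℝ) 1)) :=
      hφc_meas.aestronglyMeasurable.congr (EventuallyEq.symm hae)
    refine Integrable.mono' (integrable_const ((1 + q 1) * M)) haes ?_
    refine (ae_restrict_iff' measurableSet_Ioc).2 (ae_of_all _ ?_)
    intro x hx
    rw [Real.norm_eq_abs, abs_of_nonneg (hcst_nonneg x (hIoc_sub hx))]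
    exact hcst_le x (hIoc_sub hx)
  -- notation
  set μ : ℝ := ∫ x in (0:ℝ)..1, q x with hμdef
  set C : ℝ := ∫ x in (0:ℝ)..1, cst x with hCdef
  set Q : ℝ → ℝ := fun t => ∫ x in (0:ℝ)..t, q x with hQdef
  set K : ℝ → ℝ := fun t => ∫ x in (0:ℝ)..t, cst x with hKdef
  have hC_nonneg : 0 ≤ C := intervalIntegral.integral_nonneg zero_le_one hcst_nonneg
  have hsub0 : ∀ t ∈ Icc (0:ℝ) 1, uIcc (0:ℝ) t ⊆ uIcc (0:ℝ) 1 := by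
    intro t ht
    rw [uIcc_of_le ht.1, uIcc_of_le zero_le_one]
    exact Icc_subset_Icc le_rfl ht.2
  have hsub1 : ∀ t ∈ Icc (0:ℝ) 1, uIcc t 1 ⊆ uIcc (0:ℝ) 1 := by
    intro t ht
    rw [uIcc_of_le ht.2, uIcc_of_le zero_le_one]
    exact Icc_subset_Icc ht.1 le_rfl
  have hK_cont : ContinuousOn K (uIcc (0:ℝ) 1) :=
    intervalIntegral.continuousOn_primitive_interval' hcst_int left_mem_uIcc
  have hQ_cont : ContinuousOn Q (uIcc (0:ℝ) 1) :=
    intervalIntegral.continuousOn_primitive_interval' hq_int left_mem_uIcc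
  have hK_int : IntervalIntegrable K volume 0 1 := hK_cont.intervalIntegrable
  have hQ_int : IntervalIntegrable Q volume 0 1 := hQ_cont.intervalIntegrable
  set A : ℝ := ∫ t in (0:ℝ)..1, Q t with hAdef
  set B : ℝ := ∫ t in (0:ℝ)..1, K t with hBdef
  -- pointwise key inequality: C * Q t ≤ μ * K t
  have hkey : ∀ t ∈ Icc (0:ℝ) 1, C * Q t ≤ μ * K t := by
    intro t ht
    have hIcc0t : Icc (0:ℝ) t ⊆ Icc 0 1 := Icc_subset_Icc le_rfl ht.2
    have hIcct1 : Icc t 1 ⊆ Icc (0:ℝ) 1 := Icc_subset_Icc ht.1 le_rfl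
    set Rq : ℝ := ∫ u in t..1, q u with hRqdef
    set Rc : ℝ := ∫ u in t..1, cst u with hRcdef
    have hinner : ∀ s ∈ Icc (0:ℝ) t, q s * Rc ≤ cst s * Rq := by
      intro s hs
      have hs1 : s ∈ Icc (0:ℝ) 1 := hIcc0t hs
      have h1 : (∫ u in t..1, cst u * q s) ≤ ∫ u in t..1, cst s * q u := by
        apply intervalIntegral.integral_mono_on ht.2
        · exact (hcst_int.mono_set (hsub1 t ht)).mul_const _
        · exact (hq_int.mono_set (hsub1 t ht)).const_mul _
        · intro u hu
          exact hcst_key s hs1 u (hIcct1 hu) (le_trans hs.2 hu.1)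
      rw [intervalIntegral.integral_mul_const, intervalIntegral.integral_const_mul] at h1
      calc q s * Rc = Rc * q s := mul_comm _ _
        _ ≤ cst s * Rq := h1
    have houter : Q t * Rc ≤ K t * Rq := by
      have h2 : (∫ s in (0:ℝ)..t, q s * Rc) ≤ ∫ s in (0:ℝ)..t, cst s * Rq := by
        apply intervalIntegral.integral_mono_on ht.1
        · exact (hq_int.mono_set (hsub0 t ht)).mul_const _
        · exact (hcst_int.mono_set (hsub0 t ht)).mul_const _
        · exact hinner
      rwa [intervalIntegral.integral_mul_const, intervalIntegral.integral_mul_const] at h2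
    have hCsplit : K t + Rc = C :=
      intervalIntegral.integral_add_adjacent_intervals
        (hcst_int.mono_set (hsub0 t ht)) (hcst_int.mono_set (hsub1 t ht))
    have hμsplit : Q t + Rq = μ :=
      intervalIntegral.integral_add_adjacent_intervals
        (hq_int.mono_set (hsub0 t ht)) (hq_int.mono_set (hsub1 t ht))
    have : C * Q t - μ * K t = Q t * Rc - K t * Rq := by
      rw [← hCsplit, ← hμsplit]; ring
    linarith
  -- integrated inequality: A * C ≤ B * μ
  have hBA : A * C ≤ B * μ := by
    have h3 : (0:ℝ) ≤ ∫ t in (0:ℝ)..1, (K t * μ - Q t * C) := by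
      apply intervalIntegral.integral_nonneg zero_le_one
      intro t ht
      have := hkey t ht
      linarith
    have h4 : (∫ t in (0:ℝ)..1, (K t * μ - Q t * C)) = B * μ - A * C := by
      rw [intervalIntegral.integral_sub (hK_int.mul_const _) (hQ_int.mul_const _),
        intervalIntegral.integral_mul_const, intervalIntegral.integral_mul_const]
    linarith [h4 ▸ h3]
  -- gini formulas
  have hgini : ∀ α : ℝ,
      gini (fun x => q x - α * cst x) = 1 - 2 * ((A - α * B) / (μ - α * C)) := by
    intro α
    have hden : (∫ x in (0:ℝ)..1, (q x - α * cst x)) = μ - α * C := by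
      rw [intervalIntegral.integral_sub hq_int (hcst_int.const_mul α),
        intervalIntegral.integral_const_mul]
    have hnum : ∀ t ∈ uIcc (0:ℝ) 1,
        (∫ x in (0:ℝ)..t, (q x - α * cst x)) = Q t - α * K t := by
      intro t ht
      rw [uIcc_of_le zero_le_one] at ht
      rw [intervalIntegral.integral_sub (hq_int.mono_set (hsub0 t ht))
        ((hcst_int.mono_set (hsub0 t ht)).const_mul α),
        intervalIntegral.integral_const_mul]
    unfold gini
    rw [hden]
    have hcongr : EqOn
        (fun t => (∫ x in (0:ℝ)..t, (q x - α * cst x)) / (μ - α * C))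
        (fun t => (Q t - α * K t) / (μ - α * C)) (uIcc (0:ℝ) 1) := by
      intro t ht
      simp only
      rw [hnum t ht]
    rw [intervalIntegral.integral_congr hcongr]
    rw [intervalIntegral.integral_div,
      intervalIntegral.integral_sub hQ_int (hK_int.const_mul α),
      intervalIntegral.integral_const_mul]
  have hginiq : gini q = 1 - 2 * (A / μ) := by
    unfold gini
    rw [intervalIntegral.integral_div]
  -- the limit
  refine ⟨2 * (B * μ - A * C) / (μ * μ), ?_, ?_⟩
  · exact div_nonneg (by linarith) (mul_pos hμ_pos hμ_pos).le
  · have hCε : (0:ℝ) < C + 1 := by linarith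
    set ε : ℝ := μ / (C + 1) with hεdef
    have hε : 0 < ε := div_pos hμ_pos hCε
    have hev : ∀ᶠ α in nhdsWithin (0:ℝ) (Ioi 0),
        (gini (fun x => q x - α * cst x) - gini q) / α
          = 2 * (B * μ - A * C) / (μ * (μ - α * C)) := by
      filter_upwards [Ioo_mem_nhdsGT_of_mem (show (0:ℝ) ∈ Ico (0:ℝ) ε from ⟨le_rfl, hε⟩)]
        with α hα
      have hα0 : 0 < α := hα.1
      have hμα : 0 < μ - α * C := by
        have h5 : α * (C + 1) < ε * (C + 1) := mul_lt_mul_of_pos_right hα.2 hCε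
        have h6 : ε * (C + 1) = μ := div_mul_cancel₀ μ (ne_of_gt hCε)
        nlinarith
      rw [hgini α, hginiq]
      field_simp
      ring
    have hlim : Tendsto (fun α : ℝ => 2 * (B * μ - A * C) / (μ * (μ - α * C)))
        (nhdsWithin 0 (Ioi 0)) (nhds (2 * (B * μ - A * C) / (μ * μ))) := by
      apply Tendsto.div tendsto_const_nhds
      · have hcont : Continuous fun α : ℝ => μ * (μ - α * C) :=
          continuous_const.mul (continuous_const.sub (continuous_id.mul continuous_const))
        have h7 : Tendsto (fun α : ℝ => μ * (μ - α * C)) (nhdsWithin 0 (Ioi 0))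
            (nhds (μ * (μ - 0 * C))) :=
          (hcont.tendsto 0).mono_left nhdsWithin_le_nhds
        simpa using h7
      · exact (mul_pos hμ_pos hμ_pos).ne'
    exact hlim.congr' (EventuallyEq.symm hev)
end

section
/- In the Pigou network with income distribution q(x) = 2x, tolls chosen so that the poorest fraction s ∈ [0,1] of agents uses the upper link (toll difference τ = 2s² on the lower link), the equilibrium cost is cost(x) = 2x for x ≤ s and cost(x) = (1−s)·2x + 2s² for x > s. The social cost satisfies ∫₀¹ cost(x)dx = 1 − s + 2s² − s³, and this expression attains its minimum over s ∈ [0,1] at s = 1/3, with minimum value 23/27 (which is strictly less than 1). -/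
open Set

/-- In the Pigou network with income distribution `q(x) = 2x`, toll `τ = 2s²` on the
lower link, and the poorest fraction `s` on the upper link, the equilibrium cost is
`cost(x) = 2x` for `x ≤ s` and `cost(x) = (1−s)·2x + 2s²` for `x > s`. The social cost
is `∫₀¹ cost = 1 − s + 2s² − s³`, minimized over `s ∈ [0,1]` at `s = 1/3` with minimum
value `23/27 < 1`. -/
theorem pigou_social_cost
    (s : ℝ) (hs : s ∈ Icc (0:ℝ) 1)
    (cost : ℝ → ℝ)
    (hcost : ∀ x : ℝ, cost x = if x ≤ s then 2 * x else (1 - s) * (2 * x) + 2 * s ^ 2) :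
    (∫ x in (0:ℝ)..1, cost x) = 1 - s + 2 * s ^ 2 - s ^ 3 ∧
    (∀ s' ∈ Icc (0:ℝ) 1, (23:ℝ) / 27 ≤ 1 - s' + 2 * s' ^ 2 - s' ^ 3) ∧
    1 - (1/3 : ℝ) + 2 * (1/3 : ℝ) ^ 2 - (1/3 : ℝ) ^ 3 = 23 / 27 ∧
    (23:ℝ) / 27 < 1 := by
  obtain ⟨hs0, hs1⟩ := hs
  refine ⟨?_, ?_, by norm_num, by norm_num⟩
  · have h1 : (∫ x in (0:ℝ)..s, cost x) = ∫ x in (0:ℝ)..s, 2 * x := by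
      apply intervalIntegral.integral_congr
      intro x hx
      rw [uIcc_of_le hs0] at hx
      rw [hcost x, if_pos hx.2]
    have h2 : (∫ x in s..1, cost x) = ∫ x in s..1, ((1 - s) * (2 * x) + 2 * s ^ 2) := by
      apply intervalIntegral.integral_congr_ae
      filter_upwards [] with x hx
      rw [uIoc_of_le hs1] at hx
      rw [hcost x, if_neg (not_le.2 hx.1)]
    have i1 : IntervalIntegrable cost MeasureTheory.volume 0 s := by
      apply IntervalIntegrable.congr_ae (f := fun x : ℝ => 2 * x)
      · exact (continuous_const.mul continuous_id).intervalIntegrable 0 s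
      · rw [Filter.EventuallyEq, MeasureTheory.ae_restrict_iff' measurableSet_uIoc]
        filter_upwards [] with x hx
        rw [uIoc_of_le hs0] at hx
        rw [hcost x, if_pos hx.2]
    have i2 : IntervalIntegrable cost MeasureTheory.volume s 1 := by
      apply IntervalIntegrable.congr_ae (f := fun x : ℝ => (1 - s) * (2 * x) + 2 * s ^ 2)
      · exact ((continuous_const.mul (continuous_const.mul continuous_id)).add
          continuous_const).intervalIntegrable s 1
      · rw [Filter.EventuallyEq, MeasureTheory.ae_restrict_iff' measurableSet_uIoc]
        filter_upwards [] with x hx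
        rw [uIoc_of_le hs1] at hx
        rw [hcost x, if_neg (not_le.2 hx.1)]
    rw [← intervalIntegral.integral_add_adjacent_intervals i1 i2, h1, h2]
    have e2 : (∫ x in s..1, ((1 - s) * (2 * x) + 2 * s ^ 2))
        = (1 - s) * (2 * ∫ x in s..1, x) + 2 * s ^ 2 * (1 - s) := by
      rw [intervalIntegral.integral_add
        (((intervalIntegral.intervalIntegrable_id).const_mul 2).const_mul _)
        intervalIntegrable_const, intervalIntegral.integral_const_mul,
        intervalIntegral.integral_const_mul, intervalIntegral.integral_const]
      simp [smul_eq_mul]; ring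
    rw [e2, intervalIntegral.integral_const_mul, integral_id, integral_id]
    ring
  · intro s' hs'
    nlinarith [sq_nonneg (s' - 1/3), hs'.2, sq_nonneg s']
end

section
/- (Iniquity of the Pigou network.) In the Pigou network with latencies 1 and x and income distribution q(x) = (β+1)x^β for β ≥ 0, when tolls are selected to minimize the actual latency, the optimal switching point is s = 1/2, the toll at the Nash (Wardrop) equilibrium is τ = q(s)·s = (β+1)·2^{−(β+1)}, and the iniquity index equals I(Γ) = lim_{α→0⁺}(G(q_α) − G(q))/α = β(β+1)/((β+2)·2^{β+3}), where q_α(x) = q(x) − α·cost(x) with cost(x) = (β+1)x^β for x ≤ 1/2 and cost(x) = (1/2)(β+1)x^β + (β+1)2^{−(β+1)} for x > 1/2. -/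
open Set Filter

set_option maxHeartbeats 2000000 in
/-- **Iniquity of the Pigou network.** For the Pigou network with latencies `1` and `x`
and income distribution `q(x) = (β+1)x^β`, when tolls are selected to minimize the actual
latency: the optimal switching point is `s = 1/2` (it minimizes `s + (1−s)²`), the toll
at the Nash (Wardrop) equilibrium is `τ = q(1/2)·(1/2) = (β+1)·2^{−(β+1)}`, and the
iniquity index equals `I(Γ) = β(β+1)/((β+2)·2^{β+3})`. -/
theorem pigou_iniquity
    (β : ℝ) (hβ : 0 ≤ β)
    (q : ℝ → ℝ) (hq : ∀ x : ℝ, q x = (β + 1) * x ^ β)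
    (τ : ℝ) (hτ : τ = (β + 1) * (2:ℝ) ^ (-(β + 1)))
    (cost : ℝ → ℝ)
    (hcost : ∀ x : ℝ, cost x =
      if x ≤ 1/2 then (β + 1) * x ^ β else (1/2) * (β + 1) * x ^ β + τ) :
    (∀ s ∈ Icc (0:ℝ) 1, (1/2 : ℝ) + (1 - 1/2 : ℝ) ^ 2 ≤ s + (1 - s) ^ 2) ∧
    q (1/2) * (1/2) = τ ∧
    Tendsto (fun α : ℝ => (gini (fun x => q x - α * cost x) - gini q) / α)
      (nhdsWithin 0 (Ioi 0))
      (nhds (β * (β + 1) / ((β + 2) * (2:ℝ) ^ (β + 3)))) := by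
  have hb1 : (0:ℝ) < β + 1 := by linarith
  have hb2 : (0:ℝ) < β + 2 := by linarith
  set u : ℝ := (2:ℝ) ^ β with hu_def
  have hu : (0:ℝ) < u := Real.rpow_pos_of_pos two_pos β
  have hu' : u ≠ 0 := ne_of_gt hu
  -- rpow arithmetic
  have h2b : ((1:ℝ)/2) ^ β = u⁻¹ := by
    rw [one_div, Real.inv_rpow (by norm_num)]
  have e1 : ((2:ℝ)) ^ (β + 1) = 2 * u := by
    rw [Real.rpow_add two_pos, Real.rpow_one]; ring
  have e2 : ((2:ℝ)) ^ (β + 2) = 4 * u := by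
    rw [Real.rpow_add two_pos, show ((2:ℝ)^(2:ℝ)) = 4 from by norm_num [Real.rpow_natCast]]; ring
  have e3 : ((2:ℝ)) ^ (β + 3) = 8 * u := by
    rw [Real.rpow_add two_pos, show ((2:ℝ)^(3:ℝ)) = 8 from by norm_num [Real.rpow_natCast]]; ring
  have h2b1 : ((1:ℝ)/2) ^ (β+1) = (2*u)⁻¹ := by
    rw [one_div, Real.inv_rpow (by norm_num), e1]
  have h2b2 : ((1:ℝ)/2) ^ (β+2) = (4*u)⁻¹ := by
    rw [one_div, Real.inv_rpow (by norm_num), e2]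
  have hτu : τ = (β + 1) * (2*u)⁻¹ := by
    rw [hτ, Real.rpow_neg (by norm_num), e1]
  -- continuity
  have hcrpow : Continuous (fun x : ℝ => x ^ β) := Real.continuous_rpow_const hβ
  have hcrpow1 : Continuous (fun x : ℝ => x ^ (β+1)) :=
    Real.continuous_rpow_const (by linarith)
  have hc1 : Continuous (fun x : ℝ => (β+1) * x ^ β) := continuous_const.mul hcrpow
  have hc2 : Continuous (fun x : ℝ => (1/2) * (β+1) * x ^ β + τ) :=
    ((continuous_const.mul hcrpow).add continuous_const)
  have hagree : (β+1) * ((1:ℝ)/2) ^ β = (1/2) * (β+1) * ((1:ℝ)/2) ^ β + τ := by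
    rw [h2b, hτu]; field_simp; ring
  have ccost : Continuous cost := by
    have hfe : cost = fun x => if x ≤ (1/2:ℝ) then (β+1)*x^β else (1/2)*(β+1)*x^β + τ :=
      funext hcost
    rw [hfe]
    refine Continuous.if_le hc1 hc2 continuous_id continuous_const ?_
    intro x hx
    change x = 1/2 at hx
    rw [hx]; exact hagree
  have icost : ∀ a b : ℝ, IntervalIntegrable cost MeasureTheory.volume a b :=
    fun a b => ccost.intervalIntegrable a b
  have iq : ∀ a b : ℝ, IntervalIntegrable (fun x => (β+1) * x ^ β) MeasureTheory.volume a b :=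
    fun a b => hc1.intervalIntegrable a b
  have iqq : ∀ a b : ℝ, IntervalIntegrable q MeasureTheory.volume a b := by
    intro a b
    have : q = fun x => (β+1) * x ^ β := funext hq
    rw [this]; exact iq a b
  -- integral of q
  have intQ : ∀ t : ℝ, (∫ x in (0:ℝ)..t, (β+1) * x ^ β) = t ^ (β+1) := by
    intro t
    rw [intervalIntegral.integral_const_mul, integral_rpow (Or.inl (by linarith)),
      Real.zero_rpow (by positivity)]
    field_simp
    rw [sub_zero]
  have intQab : ∀ a b : ℝ, (∫ x in a..b, (β+1) * x ^ β) = b ^ (β+1) - a ^ (β+1) := by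
    intro a b
    rw [intervalIntegral.integral_const_mul, integral_rpow (Or.inl (by linarith))]
    field_simp
  -- primitive of cost
  have hK_half : (∫ x in (0:ℝ)..(1/2:ℝ), cost x) = (2*u)⁻¹ := by
    have h : (∫ x in (0:ℝ)..(1/2:ℝ), cost x) = ∫ x in (0:ℝ)..(1/2:ℝ), (β+1) * x ^ β := by
      apply intervalIntegral.integral_congr
      intro x hx
      rw [Set.uIcc_of_le (by norm_num : (0:ℝ) ≤ 1/2)] at hx
      rw [hcost, if_pos hx.2]
    rw [h, intQ, h2b1]
  have hK_right : ∀ t : ℝ, 1/2 ≤ t →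
      (∫ x in (1/2:ℝ)..t, cost x) = (1/2) * (t ^ (β+1) - (2*u)⁻¹) + τ * (t - 1/2) := by
    intro t ht
    have h : (∫ x in (1/2:ℝ)..t, cost x)
        = ∫ x in (1/2:ℝ)..t, ((1/2) * (β+1) * x ^ β + τ) := by
      apply intervalIntegral.integral_congr
      intro x hx
      rw [Set.uIcc_of_le ht] at hx
      rw [hcost]
      split_ifs with hle
      · have hx2 : x = 1/2 := le_antisymm hle hx.1
        rw [hx2]; exact hagree
      · rfl
    rw [h, intervalIntegral.integral_add (show IntervalIntegrable (fun x : ℝ => (1/2) * (β+1) * x ^ β)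
        MeasureTheory.volume (1/2) t from (continuous_const.mul hcrpow).intervalIntegrable _ _)
      intervalIntegrable_const, intervalIntegral.integral_const]
    have h2 : (∫ x in (1/2:ℝ)..t, (1/2) * (β+1) * x ^ β) = (1/2) * (t ^ (β+1) - (2*u)⁻¹) := by
      have hfe : (fun x : ℝ => (1/2) * (β+1) * x ^ β) = fun x => (1/2) * ((β+1) * x ^ β) := by
        funext x; ring
      rw [hfe, intervalIntegral.integral_const_mul, intQab, h2b1]
    rw [h2]
    simp only [smul_eq_mul]
    ring
  have hK_formula : ∀ t : ℝ, 1/2 ≤ t →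
      (∫ x in (0:ℝ)..t, cost x) = (1/2) * t ^ (β+1) + (4*u)⁻¹ + τ * (t - 1/2) := by
    intro t ht
    have hsplit : (∫ x in (0:ℝ)..(1/2:ℝ), cost x) + (∫ x in (1/2:ℝ)..t, cost x)
        = ∫ x in (0:ℝ)..t, cost x :=
      intervalIntegral.integral_add_adjacent_intervals (icost 0 (1/2)) (icost (1/2) t)
    rw [← hsplit, hK_half, hK_right t ht]
    field_simp
    ring
  have hK_left : ∀ t : ℝ, t ≤ 1/2 → (∫ x in (0:ℝ)..t, cost x) = t ^ (β+1) := by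
    intro t ht
    have h : (∫ x in (0:ℝ)..t, cost x) = ∫ x in (0:ℝ)..t, (β+1) * x ^ β := by
      apply intervalIntegral.integral_congr
      intro x hx
      rcases le_total 0 t with h0 | h0
      · rw [Set.uIcc_of_le h0] at hx
        rw [hcost, if_pos (hx.2.trans ht)]
      · rw [Set.uIcc_of_ge h0] at hx
        rw [hcost, if_pos (hx.2.trans (by linarith))]
    rw [h, intQ]
  -- total integrals
  have hM : (∫ x in (0:ℝ)..1, q x) = 1 := by
    simp only [hq]; rw [intQ, Real.one_rpow]
  set C : ℝ := 1/2 + (4*u)⁻¹ + τ/2 with hC_def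
  have hC : (∫ x in (0:ℝ)..1, cost x) = C := by
    rw [hK_formula 1 (by norm_num), Real.one_rpow, hC_def]; ring
  have iKK : ∀ a b : ℝ, IntervalIntegrable (fun t => ∫ x in (0:ℝ)..t, cost x)
      MeasureTheory.volume a b := by
    intro a b
    exact (intervalIntegral.continuous_primitive (fun a b => icost a b) 0).intervalIntegrable a b
  set B : ℝ := (4*u)⁻¹ / (β+2) + ((1/2) * (1 - (4*u)⁻¹)) / (β+2) + (8*u)⁻¹ + τ/8
    with hB_def
  have hB : (∫ t in (0:ℝ)..1, ∫ x in (0:ℝ)..t, cost x) = B := by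
    have hsplit : (∫ t in (0:ℝ)..(1/2:ℝ), ∫ x in (0:ℝ)..t, cost x)
        + (∫ t in (1/2:ℝ)..1, ∫ x in (0:ℝ)..t, cost x)
        = ∫ t in (0:ℝ)..1, ∫ x in (0:ℝ)..t, cost x :=
      intervalIntegral.integral_add_adjacent_intervals (iKK 0 (1/2)) (iKK (1/2) 1)
    have part1 : (∫ t in (0:ℝ)..(1/2:ℝ), ∫ x in (0:ℝ)..t, cost x) = (4*u)⁻¹ / (β+2) := by
      have h : (∫ t in (0:ℝ)..(1/2:ℝ), ∫ x in (0:ℝ)..t, cost x)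
          = ∫ t in (0:ℝ)..(1/2:ℝ), t ^ (β+1) := by
        apply intervalIntegral.integral_congr
        intro t ht
        rw [Set.uIcc_of_le (by norm_num : (0:ℝ) ≤ 1/2)] at ht
        exact hK_left t ht.2
      rw [h, integral_rpow (Or.inl (by linarith)), Real.zero_rpow (by positivity),
        show β + 1 + 1 = β + 2 from by ring, h2b2]
      ring
    have part2 : (∫ t in (1/2:ℝ)..1, ∫ x in (0:ℝ)..t, cost x)
        = (1/2) * ((1 - (4*u)⁻¹)/(β+2)) + (4*u)⁻¹ * (1/2) + τ * (1/8) := by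
      have hcg : (∫ t in (1/2:ℝ)..1, ∫ x in (0:ℝ)..t, cost x)
          = ∫ t in (1/2:ℝ)..1, ((1/2) * t ^ (β+1) + (4*u)⁻¹ + τ * (t - 1/2)) := by
        apply intervalIntegral.integral_congr
        intro t ht
        rw [Set.uIcc_of_le (by norm_num : (1/2:ℝ) ≤ 1)] at ht
        exact hK_formula t ht.1
      have i1 : IntervalIntegrable (fun t : ℝ => (1/2) * t ^ (β+1))
          MeasureTheory.volume (1/2) 1 :=
        (continuous_const.mul hcrpow1).intervalIntegrable _ _
      have i2 : IntervalIntegrable (fun t : ℝ => τ * (t - 1/2)) MeasureTheory.volume (1/2) 1 :=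
        (continuous_const.mul (continuous_sub_right _)).intervalIntegrable _ _
      rw [hcg, intervalIntegral.integral_add (i1.add intervalIntegrable_const) i2,
        intervalIntegral.integral_add i1 intervalIntegrable_const,
        intervalIntegral.integral_const_mul, intervalIntegral.integral_const_mul,
        integral_rpow (Or.inl (by linarith)), intervalIntegral.integral_const]
      have hid : (∫ t in (1/2:ℝ)..1, (t - 1/2)) = 1/8 := by
        rw [intervalIntegral.integral_sub intervalIntegral.intervalIntegrable_id
          intervalIntegrable_const, integral_id, intervalIntegral.integral_const]
        norm_num
      rw [hid, show β + 1 + 1 = β + 2 from by ring, Real.one_rpow, h2b2]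
      simp only [smul_eq_mul]
      ring
    rw [← hsplit, part1, part2, hB_def]
    field_simp
    ring
  -- A
  have hA : (∫ t in (0:ℝ)..1, (t:ℝ) ^ (β+1)) = 1/(β+2) := by
    rw [integral_rpow (Or.inl (by linarith)), Real.zero_rpow (by positivity),
      show β + 1 + 1 = β + 2 from by ring, Real.one_rpow]
    norm_num
  set A : ℝ := 1/(β+2) with hA_def
  -- gini of q
  have gq : gini q = 1 - 2 * A := by
    unfold gini
    simp only [hq, intQ, Real.one_rpow, div_one, hA]
  -- gini of perturbed income
  have key : ∀ α : ℝ, gini (fun x => q x - α * cost x) = 1 - 2 * ((A - α*B)/(1 - α*C)) := by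
    intro α
    unfold gini
    have hMα : (∫ x in (0:ℝ)..1, (q x - α * cost x)) = 1 - α * C := by
      rw [intervalIntegral.integral_sub (iqq 0 1) ((icost 0 1).const_mul α),
        intervalIntegral.integral_const_mul, hC, hM]
    have hQα : ∀ t : ℝ, (∫ x in (0:ℝ)..t, (q x - α * cost x))
        = t ^ (β+1) - α * ∫ x in (0:ℝ)..t, cost x := by
      intro t
      rw [intervalIntegral.integral_sub (iqq 0 t) ((icost 0 t).const_mul α),
        intervalIntegral.integral_const_mul]
      congr 1
      simp only [hq]; exact intQ t
    simp only [hMα, hQα]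
    rw [intervalIntegral.integral_div,
      intervalIntegral.integral_sub (hcrpow1.intervalIntegrable _ _) ((iKK 0 1).const_mul α),
      intervalIntegral.integral_const_mul, hA, hB]
  -- final arithmetic identity
  have harith : 2 * (B - A * C) = β * (β + 1) / ((β + 2) * (2:ℝ) ^ (β + 3)) := by
    rw [e3, hA_def, hB_def, hC_def, hτu]
    field_simp
    ring
  refine ⟨?_, ?_, ?_⟩
  · intro s _
    nlinarith [sq_nonneg (s - 1/2)]
  · rw [hq, hτu, h2b, mul_inv]; ring
  · have hCpos : 0 < C := by
      rw [hC_def, hτu]; positivity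
    have heq : (fun α : ℝ => (gini (fun x => q x - α * cost x) - gini q) / α)
        =ᶠ[nhdsWithin (0:ℝ) (Ioi 0)] (fun α : ℝ => 2 * (B - A*C) / (1 - α*C)) := by
      have hmem : Ioo (0:ℝ) C⁻¹ ∈ nhdsWithin (0:ℝ) (Ioi 0) := by
        rw [mem_nhdsWithin]
        exact ⟨Iio C⁻¹, isOpen_Iio, by simpa using inv_pos.mpr hCpos,
          fun x hx => ⟨hx.2, hx.1⟩⟩
      filter_upwards [hmem] with α hα
      have hα0 : α ≠ 0 := ne_of_gt hα.1
      have hden : 1 - α * C ≠ 0 := by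
        have h1 : α * C < C⁻¹ * C := mul_lt_mul_of_pos_right hα.2 hCpos
        rw [inv_mul_cancel₀ (ne_of_gt hCpos)] at h1
        linarith
      rw [key, gq]
      field_simp
      ring
    have hlim : Tendsto (fun α : ℝ => 2 * (B - A*C) / (1 - α*C)) (nhdsWithin 0 (Ioi 0))
        (nhds (2 * (B - A*C))) := by
      have h1 : Tendsto (fun α : ℝ => 1 - α*C) (nhds 0) (nhds 1) := by
        have hcont : Continuous (fun α : ℝ => 1 - α*C) := by continuity
        simpa using hcont.tendsto 0
      have h2 := (tendsto_const_nhds (x := 2 * (B - A*C))).div h1 one_ne_zero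
      simp only [div_one] at h2
      exact h2.mono_left nhdsWithin_le_nhds
    rw [← harith]
    exact Tendsto.congr' heq.symm hlim
end

section
/- For the Pigou network with income distribution q(x) = (β+1)x^β, switching point s = 1/2 and toll τ = (β+1)2^{−(β+1)}, the Gini coefficient of the ex post distribution q_α(x) = q(x) − α·cost(x) satisfies, for all sufficiently small α > 0, the closed-form identity G(q_α) = β(α(β + 2^{β+2} + 3) − 2^{β+3}) / (2(β+2)(α(β + 2^{β+1} + 2) − 2^{β+2})); in particular G(q_α) = β/(β+2) + [β(β+1)/((β+2)2^{β+3})]·α + O(α²) as α → 0. -/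
set_option maxHeartbeats 1000000

open Set Filter Asymptotics

/-- For the Pigou network with income distribution `q(x) = (β+1)x^β`, switching point
`s = 1/2` and toll `τ = (β+1)2^{−(β+1)}`, the Gini coefficient of the ex post
distribution `q_α = q − α·cost` satisfies, for all sufficiently small `α > 0`,
`G(q_α) = β(α(β + 2^{β+2} + 3) − 2^{β+3}) / (2(β+2)(α(β + 2^{β+1} + 2) − 2^{β+2}))`;
in particular `G(q_α) = β/(β+2) + [β(β+1)/((β+2)2^{β+3})]·α + O(α²)` as `α → 0⁺`. -/
theorem pigou_gini_closed_form
    (β : ℝ) (hβ : 0 ≤ β)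
    (q : ℝ → ℝ) (hq : ∀ x : ℝ, q x = (β + 1) * x ^ β)
    (τ : ℝ) (hτ : τ = (β + 1) * (2:ℝ) ^ (-(β + 1)))
    (cost : ℝ → ℝ)
    (hcost : ∀ x : ℝ, cost x =
      if x ≤ 1/2 then (β + 1) * x ^ β else (1/2) * (β + 1) * x ^ β + τ) :
    (∃ α₀ : ℝ, 0 < α₀ ∧ ∀ α : ℝ, 0 < α → α < α₀ →
      gini (fun x => q x - α * cost x) =
        β * (α * (β + (2:ℝ) ^ (β + 2) + 3) - (2:ℝ) ^ (β + 3)) /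
          (2 * (β + 2) * (α * (β + (2:ℝ) ^ (β + 1) + 2) - (2:ℝ) ^ (β + 2)))) ∧
    (fun α : ℝ => gini (fun x => q x - α * cost x)
        - (β / (β + 2) + β * (β + 1) / ((β + 2) * (2:ℝ) ^ (β + 3)) * α))
      =O[nhdsWithin 0 (Ioi 0)] (fun α : ℝ => α ^ 2) := by
  set c : ℝ := (2:ℝ) ^ (-(β + 1)) with hc_def
  have hcpos : 0 < c := Real.rpow_pos_of_pos two_pos _
  have hb1 : (0:ℝ) < β + 1 := by linarith
  have hb2 : (0:ℝ) < β + 2 := by linarith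
  have hc1 : ((1:ℝ)/2) ^ (β + 1) = c := by
    rw [hc_def, Real.rpow_neg (by norm_num), one_div,
      ← Real.inv_rpow (by norm_num)]
  have hc2 : ((1:ℝ)/2) ^ (β + 2) = c / 2 := by
    have h : β + 2 = (β + 1) + 1 := by ring
    rw [h, Real.rpow_add (by norm_num), hc1, Real.rpow_one]
    ring
  have hB1 : (2:ℝ) ^ (β + 1) = c⁻¹ := by
    rw [hc_def, Real.rpow_neg (by norm_num), inv_inv]
  have hB2 : (2:ℝ) ^ (β + 2) = 2 / c := by
    have h : β + 2 = (β + 1) + 1 := by ring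
    rw [h, Real.rpow_add two_pos, hB1, Real.rpow_one]
    field_simp
  have hB3 : (2:ℝ) ^ (β + 3) = 4 / c := by
    have h : β + 3 = (β + 2) + 1 := by ring
    rw [h, Real.rpow_add two_pos, hB2, Real.rpow_one]
    ring
  have hKpos : (0:ℝ) < β + c⁻¹ + 2 := by positivity
  have h1pos : (0:ℝ) < 1 + (β + 2) * c := by positivity
  set α₀ : ℝ := min (1 + (β + 2) * c)⁻¹ ((2 / c) / (β + c⁻¹ + 2)) with hα₀_def
  have hα₀pos : 0 < α₀ := lt_min (by positivity) (by positivity)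
  -- the main closed form
  have main : ∀ α : ℝ, 0 < α → α < α₀ →
      gini (fun x => q x - α * cost x) =
        β * (α * (β + (2:ℝ) ^ (β + 2) + 3) - (2:ℝ) ^ (β + 3)) /
          (2 * (β + 2) * (α * (β + (2:ℝ) ^ (β + 1) + 2) - (2:ℝ) ^ (β + 2))) := by
    intro α hα hαα₀
    have h1 : α * (1 + (β + 2) * c) < 1 := by
      calc α * (1 + (β + 2) * c)
          < (1 + (β + 2) * c)⁻¹ * (1 + (β + 2) * c) :=
            mul_lt_mul_of_pos_right (lt_of_lt_of_le hαα₀ (min_le_left _ _)) h1pos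
        _ = 1 := inv_mul_cancel₀ (ne_of_gt h1pos)
    have h2 : α * (β + c⁻¹ + 2) < 2 / c :=
      (lt_div_iff₀ hKpos).mp (lt_of_lt_of_le hαα₀ (min_le_right _ _))
    have hirpow : ∀ a b : ℝ, IntervalIntegrable (fun x => x ^ β) MeasureTheory.volume a b :=
      fun a b => intervalIntegral.intervalIntegrable_rpow (Or.inl hβ)
    -- Q(t) for t ∈ [0, 1/2]
    have hQ1 : ∀ t : ℝ, 0 ≤ t → t ≤ 1/2 →
        (∫ x in (0:ℝ)..t, (q x - α * cost x)) = (1 - α) * t ^ (β + 1) := by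
      intro t ht ht'
      have he : Set.EqOn (fun x => q x - α * cost x)
          (fun x => ((1 - α) * (β + 1)) * x ^ β) (Set.uIcc 0 t) := by
        intro x hx
        rw [Set.uIcc_of_le ht] at hx
        simp only [hq, hcost, if_pos (le_trans hx.2 ht')]
        ring
      rw [intervalIntegral.integral_congr he, intervalIntegral.integral_const_mul,
        integral_rpow (Or.inl (by linarith : (-1:ℝ) < β)),
        Real.zero_rpow (ne_of_gt hb1)]
      field_simp
      ring
    have hIhalf : (∫ x in (0:ℝ)..(1/2), (q x - α * cost x)) = (1 - α) * c := by
      rw [hQ1 (1/2) (by norm_num) le_rfl, hc1]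
    -- integrability of the distribution on [0,1/2] and [1/2,t]
    have hf1 : IntervalIntegrable (fun x => q x - α * cost x) MeasureTheory.volume 0 (1/2) := by
      rw [intervalIntegrable_iff_integrableOn_Ioc_of_le (by norm_num)]
      refine MeasureTheory.IntegrableOn.congr_fun
        ((((hirpow 0 (1/2)).const_mul (β + 1)).const_mul (1 - α)).1) ?_ measurableSet_Ioc
      intro x hx
      simp only [hq, hcost, if_pos hx.2]
      ring
    have hf2 : ∀ t : ℝ, 1/2 ≤ t →
        IntervalIntegrable (fun x => q x - α * cost x) MeasureTheory.volume (1/2) t := by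
      intro t ht
      rw [intervalIntegrable_iff_integrableOn_Ioc_of_le ht]
      refine MeasureTheory.IntegrableOn.congr_fun
        (((((hirpow (1/2) t).const_mul (β + 1)).const_mul (1 - α/2)).sub
          (intervalIntegrable_const (c := α * τ))).1) ?_ measurableSet_Ioc
      intro x hx
      simp only [hq, hcost, if_neg (not_le.mpr hx.1)]
      ring
    -- Q(t) for t ∈ [1/2, 1]
    have hQ2 : ∀ t : ℝ, 1/2 ≤ t →
        (∫ x in (0:ℝ)..t, (q x - α * cost x)) =
          (1 - α) * c + (1 - α/2) * (t ^ (β + 1) - c) - α * τ * (t - 1/2) := by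
      intro t ht
      rw [← intervalIntegral.integral_add_adjacent_intervals hf1 (hf2 t ht), hIhalf]
      have he : ∀ᵐ x ∂MeasureTheory.volume, x ∈ Set.uIoc (1/2:ℝ) t →
          q x - α * cost x = (1 - α/2) * ((β + 1) * x ^ β) - α * τ := by
        refine Filter.Eventually.of_forall fun x hx => ?_
        rw [Set.uIoc_of_le ht] at hx
        simp only [hq, hcost, if_neg (not_le.mpr hx.1)]
        ring
      rw [intervalIntegral.integral_congr_ae he,
        intervalIntegral.integral_sub
          (((hirpow (1/2) t).const_mul (β + 1)).const_mul (1 - α/2))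
          (intervalIntegrable_const (c := α * τ)),
        intervalIntegral.integral_const_mul, intervalIntegral.integral_const_mul,
        integral_rpow (Or.inl (by linarith : (-1:ℝ) < β)),
        intervalIntegral.integral_const, smul_eq_mul, hc1]
      field_simp
      ring
    -- the mean
    have hμ : (∫ x in (0:ℝ)..1, (q x - α * cost x)) =
        (1 - α) * c + (1 - α/2) * (1 - c) - α * τ * (1/2) := by
      rw [hQ2 1 (by norm_num), Real.one_rpow]
      ring
    -- the integral of Q
    have hI : (∫ t in (0:ℝ)..1, ∫ x in (0:ℝ)..t, (q x - α * cost x)) =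
        (1 - α) * (c/2) / (β + 2) +
          ((1 - α/2) * ((1 - c/2) / (β + 2)) - α * τ * (3/8) +
            ((1 - α) * c - (1 - α/2) * c + α * τ * (1/2)) * (1/2)) := by
      have hstep1 : (∫ t in (0:ℝ)..1, ∫ x in (0:ℝ)..t, (q x - α * cost x)) =
          ∫ t in (0:ℝ)..1, (if t ≤ 1/2 then (1 - α) * t ^ (β + 1)
            else (1 - α) * c + (1 - α/2) * (t ^ (β + 1) - c) - α * τ * (t - 1/2)) := by
        refine intervalIntegral.integral_congr fun t ht => ?_
        rw [Set.uIcc_of_le (by norm_num : (0:ℝ) ≤ 1)] at ht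
        by_cases h : t ≤ 1/2
        · rw [if_pos h, hQ1 t ht.1 h]
        · rw [if_neg h, hQ2 t (le_of_lt (not_le.mp h))]
      rw [hstep1]
      have hint1 : IntervalIntegrable (fun t => if t ≤ 1/2 then (1 - α) * t ^ (β + 1)
          else (1 - α) * c + (1 - α/2) * (t ^ (β + 1) - c) - α * τ * (t - 1/2))
          MeasureTheory.volume 0 (1/2) := by
        rw [intervalIntegrable_iff_integrableOn_Ioc_of_le (by norm_num)]
        refine MeasureTheory.IntegrableOn.congr_fun
          (((intervalIntegral.intervalIntegrable_rpow
            (r := β + 1) (a := 0) (b := 1/2) (Or.inl (le_of_lt hb1))).const_mul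
              (1 - α)).1) ?_ measurableSet_Ioc
        intro x hx
        simp only [if_pos hx.2]
      have hint2 : IntervalIntegrable (fun t => if t ≤ 1/2 then (1 - α) * t ^ (β + 1)
          else (1 - α) * c + (1 - α/2) * (t ^ (β + 1) - c) - α * τ * (t - 1/2))
          MeasureTheory.volume (1/2) 1 := by
        rw [intervalIntegrable_iff_integrableOn_Ioc_of_le (by norm_num)]
        refine MeasureTheory.IntegrableOn.congr_fun
          ((((intervalIntegrable_const (c := (1 - α) * c)).add
            (((intervalIntegral.intervalIntegrable_rpow (r := β + 1) (a := 1/2) (b := 1)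
              (Or.inl (le_of_lt hb1))).sub (intervalIntegrable_const (c := c))).const_mul
                (1 - α/2))).sub
            ((intervalIntegral.intervalIntegrable_id.sub (intervalIntegrable_const (c := (1/2:ℝ)))).const_mul
              (α * τ))).1) ?_ measurableSet_Ioc
        intro x hx
        simp only [if_neg (not_le.mpr hx.1)]
      rw [← intervalIntegral.integral_add_adjacent_intervals hint1 hint2]
      have hpart1 : (∫ t in (0:ℝ)..(1/2), (if t ≤ 1/2 then (1 - α) * t ^ (β + 1)
          else (1 - α) * c + (1 - α/2) * (t ^ (β + 1) - c) - α * τ * (t - 1/2))) =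
          (1 - α) * (c/2) / (β + 2) := by
        have he : Set.EqOn (fun t => if t ≤ 1/2 then (1 - α) * t ^ (β + 1)
            else (1 - α) * c + (1 - α/2) * (t ^ (β + 1) - c) - α * τ * (t - 1/2))
            (fun t => (1 - α) * t ^ (β + 1)) (Set.uIcc 0 (1/2)) := by
          intro x hx
          rw [Set.uIcc_of_le (by norm_num : (0:ℝ) ≤ 1/2)] at hx
          simp only [if_pos hx.2]
        rw [intervalIntegral.integral_congr he, intervalIntegral.integral_const_mul,
          integral_rpow (Or.inl (by linarith : (-1:ℝ) < β + 1))]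
        have : β + 1 + 1 = β + 2 := by ring
        rw [this, Real.zero_rpow (ne_of_gt hb2), hc2]
        ring
      have hpart2 : (∫ t in (1/2:ℝ)..1, (if t ≤ 1/2 then (1 - α) * t ^ (β + 1)
          else (1 - α) * c + (1 - α/2) * (t ^ (β + 1) - c) - α * τ * (t - 1/2))) =
          (1 - α/2) * ((1 - c/2) / (β + 2)) - α * τ * (3/8) +
            ((1 - α) * c - (1 - α/2) * c + α * τ * (1/2)) * (1/2) := by
        have he : ∀ᵐ x ∂MeasureTheory.volume, x ∈ Set.uIoc (1/2:ℝ) 1 →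
            (if x ≤ 1/2 then (1 - α) * x ^ (β + 1)
              else (1 - α) * c + (1 - α/2) * (x ^ (β + 1) - c) - α * τ * (x - 1/2)) =
            (1 - α/2) * x ^ (β + 1) - α * τ * x +
              ((1 - α) * c - (1 - α/2) * c + α * τ * (1/2)) := by
          refine Filter.Eventually.of_forall fun x hx => ?_
          rw [Set.uIoc_of_le (by norm_num : (1/2:ℝ) ≤ 1)] at hx
          rw [if_neg (not_le.mpr hx.1)]
          ring
        rw [intervalIntegral.integral_congr_ae he,
          intervalIntegral.integral_add
            (((intervalIntegral.intervalIntegrable_rpow (r := β + 1) (a := 1/2) (b := 1)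
              (Or.inl (le_of_lt hb1))).const_mul (1 - α/2)).sub
              (intervalIntegral.intervalIntegrable_id.const_mul (α * τ)))
            intervalIntegrable_const,
          intervalIntegral.integral_sub
            ((intervalIntegral.intervalIntegrable_rpow (r := β + 1) (a := 1/2) (b := 1)
              (Or.inl (le_of_lt hb1))).const_mul (1 - α/2))
            (intervalIntegral.intervalIntegrable_id.const_mul (α * τ)),
          intervalIntegral.integral_const_mul, intervalIntegral.integral_const_mul,
          integral_rpow (Or.inl (by linarith : (-1:ℝ) < β + 1)),
          integral_id, intervalIntegral.integral_const, smul_eq_mul]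
        have h21 : β + 1 + 1 = β + 2 := by ring
        rw [h21, Real.one_rpow, hc2]
        field_simp
        ring
      rw [hpart1, hpart2]
    -- positivity of the mean
    have hμpos : 0 < (1 - α) * c + (1 - α/2) * (1 - c) - α * τ * (1/2) := by
      rw [hτ]
      nlinarith [h1, hcpos, hα]
    -- compute the gini coefficient
    rw [gini, intervalIntegral.integral_div, hI, hμ]
    rw [hB1, hB2, hB3, hτ]
    have hden : α * (β + c⁻¹ + 2) - 2 / c < 0 := by linarith
    have hDne : 2 * (β + 2) * (α * (β + c⁻¹ + 2) - 2 / c) ≠ 0 :=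
      mul_ne_zero (mul_ne_zero two_ne_zero (ne_of_gt hb2)) (ne_of_lt hden)
    have hμ2 : (1 - α) * c + (1 - α/2) * (1 - c) - α * ((β + 1) * c) * (1/2)
        = 1 - α/2 * (1 + (β + 2) * c) := by ring
    have hI2 : (1 - α) * (c/2) / (β + 2) +
          ((1 - α/2) * ((1 - c/2) / (β + 2)) - α * ((β + 1) * c) * (3/8) +
            ((1 - α) * c - (1 - α/2) * c + α * ((β + 1) * c) * (1/2)) * (1/2))
        = (4 * (1 - α) * c + 8 * (1 - α/2) * (1 - c/2) - 3 * α * (β + 1) * (β + 2) * c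
            + 2 * α * β * (β + 2) * c) / (8 * (β + 2)) := by
      field_simp
      ring
    have hMpos : 0 < 1 - α/2 * (1 + (β + 2) * c) := by nlinarith [h1]
    rw [hμ2, hI2, div_div]
    have h8 : (8 * (β + 2)) * (1 - α/2 * (1 + (β + 2) * c)) ≠ 0 :=
      mul_ne_zero (by positivity) (ne_of_gt hMpos)
    rw [show (1:ℝ) - 2 * ((4 * (1 - α) * c + 8 * (1 - α/2) * (1 - c/2)
          - 3 * α * (β + 1) * (β + 2) * c + 2 * α * β * (β + 2) * c) /
          (8 * (β + 2) * (1 - α/2 * (1 + (β + 2) * c))))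
        = (8 * (β + 2) * (1 - α/2 * (1 + (β + 2) * c))
            - 2 * (4 * (1 - α) * c + 8 * (1 - α/2) * (1 - c/2)
              - 3 * α * (β + 1) * (β + 2) * c + 2 * α * β * (β + 2) * c)) /
          (8 * (β + 2) * (1 - α/2 * (1 + (β + 2) * c))) by
      rw [sub_div, div_self h8, mul_div_assoc]]
    rw [div_eq_div_iff h8 hDne]
    field_simp [ne_of_gt hcpos]
    ring
  refine ⟨⟨α₀, hα₀pos, main⟩, ?_⟩
  set h : ℝ → ℝ := fun α =>
    -(β * (β + 1) / ((β + 2) * (4 / c)) * (β + c⁻¹ + 2)) / (α * (β + c⁻¹ + 2) - 2 / c)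
    with hh_def
  have hne0 : (0:ℝ) * (β + c⁻¹ + 2) - 2 / c ≠ 0 := by
    have : (0:ℝ) < 2 / c := by positivity
    simp only [zero_mul, zero_sub]
    exact neg_ne_zero.mpr (ne_of_gt this)
  have hcont : ContinuousAt h 0 := by
    apply ContinuousAt.div continuousAt_const
    · fun_prop
    · exact hne0
  have hO1 : h =O[nhdsWithin 0 (Ioi 0)] (fun _ : ℝ => (1:ℝ)) :=
    ((hcont.tendsto).mono_left nhdsWithin_le_nhds).isBigO_one ℝ
  have heq : (fun α : ℝ => gini (fun x => q x - α * cost x)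
        - (β / (β + 2) + β * (β + 1) / ((β + 2) * (2:ℝ) ^ (β + 3)) * α))
      =ᶠ[nhdsWithin 0 (Ioi 0)] fun α : ℝ => α ^ 2 * h α := by
    filter_upwards [Ioo_mem_nhdsGT_of_mem
      (⟨le_refl (0:ℝ), hα₀pos⟩ : (0:ℝ) ∈ Ico (0:ℝ) α₀)] with α hα
    have h2 : α * (β + c⁻¹ + 2) < 2 / c :=
      (lt_div_iff₀ hKpos).mp (lt_of_lt_of_le hα.2 (min_le_right _ _))
    have hden : α * (β + c⁻¹ + 2) - 2 / c < 0 := by linarith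
    have hdne : α * (β + c⁻¹ + 2) - 2 / c ≠ 0 := ne_of_lt hden
    have hmne : 2 * (β + 2) * (α * (β + c⁻¹ + 2) - 2 / c) ≠ 0 :=
      mul_ne_zero (mul_ne_zero two_ne_zero (ne_of_gt hb2)) hdne
    have key : ∀ a y m : ℝ, m ≠ 0 → a / m - y = (a - y * m) / m := by
      intro a y m hm
      rw [sub_div, mul_div_cancel_right₀ y hm]
    rw [main α hα.1 hα.2, hB1, hB2, hB3]
    simp only [hh_def]
    rw [key _ _ _ hmne]
    conv_rhs => rw [← mul_div_assoc]
    rw [div_eq_div_iff hmne hdne]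
    field_simp [ne_of_gt hcpos, ne_of_gt hb2]
    ring
  refine heq.trans_isBigO ?_
  simpa using (isBigO_refl (fun α : ℝ => α ^ 2) (nhdsWithin 0 (Ioi 0))).mul hO1
end
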